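/- The first prolongation space g_1 is one-dimensional, spanned by the map u_Y defined by u_Y(X) = −(ad_g H)|_m, u_Y(ε_1) = 0, u_Y(ε_i) = (i−1)(2n−5−i)·ε_{i−1} for 2 ≤ i ≤ 2n−6, and u_Y(η) = 0; and the second prolongation space g_2 is zero. -/

import Mathlib

noncomputable section

open scoped BigOperators

/-- The underlying vector space of `gl₂(ℝ)`, with basis `Y, H, E, X` at indices `0,1,2,3`. -/
abbrev G2 : Type := Fin 4 → ℝ

/-- The underlying vector space of the Heisenberg algebra `heis_{2n-5}`:
coefficients of `ε_1, …, ε_{2n-6}` together with the coefficient of `η`. -/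
abbrev Hs (n : ℕ) : Type := (Fin (2*n-6) → ℝ) × ℝ

/-- The underlying vector space of `g = gl₂(ℝ) ⋉ heis_{2n-5}`. -/
abbrev Gg (n : ℕ) : Type := G2 × Hs n

/-- The basis vector `ε_p` (1-based index `p`). -/
def epsV (n : ℕ) (p : ℕ) : Hs n := (fun i => if i.val + 1 = p then 1 else 0, 0)

/-- The central basis vector `η`. -/
def etaV (n : ℕ) : Hs n := (0, 1)

/-- The Heisenberg bracket, encoding `[ε_i, ε_{2n-5-i}] = (-1)^i η`. -/
def heisBr (n : ℕ) (x y : Hs n) : Hs n :=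
  (0, ∑ i : Fin (2*n-6), (-1 : ℝ)^(i.val+1) * x.1 i * y.1 i.rev)

/-- The `gl₂(ℝ)` bracket: `[X,Y]=H`, `[H,X]=2X`, `[H,Y]=-2Y`, and `E` is central. -/
def gl2Br (a b : G2) : G2 :=
  ![-2*(a 1 * b 0 - a 0 * b 1), a 3 * b 0 - a 0 * b 3, 0, 2*(a 1 * b 3 - a 3 * b 1)]

/-- The map `φ : gl₂(ℝ) → End(heis_{2n-5})` from the paper. -/
def phi (n : ℕ) (a : G2) (v : Hs n) : Hs n :=
  (fun i =>
      a 1 * (2*(i.val:ℝ) + 7 - 2*(n:ℝ)) * v.1 i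
    + a 2 * v.1 i
    + a 3 * (if h : 0 < i.val then v.1 ⟨i.val - 1, by have := i.isLt; omega⟩ else 0)
    + a 0 * (((i.val:ℝ)+1) * (2*(n:ℝ) - 7 - (i.val:ℝ))) *
        (if h : i.val + 1 < 2*n-6 then v.1 ⟨i.val+1, h⟩ else 0),
   2 * a 2 * v.2)

/-- The bracket of the semidirect product `g = gl₂(ℝ) ⋉_φ heis_{2n-5}`. -/
def gBr (n : ℕ) (x y : Gg n) : Gg n :=
  (gl2Br x.1 y.1, phi n x.1 y.2 - phi n y.1 x.2 + heisBr n x.2 y.2)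

def bY (n : ℕ) : Gg n := (![1,0,0,0], 0)
def bH (n : ℕ) : Gg n := (![0,1,0,0], 0)
def bE (n : ℕ) : Gg n := (![0,0,1,0], 0)
def bX (n : ℕ) : Gg n := (![0,0,0,1], 0)
def bEps (n : ℕ) (p : ℕ) : Gg n := (0, epsV n p)
def bEta (n : ℕ) : Gg n := (0, etaV n)

/-- The weight-`w` graded component of `g` in the grading of `s^{k,n}`: the span of the
basis elements of weight `w`, where `wght Y = 1`, `wght H = wght E = 0`, `wght X = -1`,
`wght ε_p = n-4-k-p`, `wght η = -3-2k`. -/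
def gComp (n k : ℕ) (w : ℤ) : Submodule ℝ (Gg n) :=
  Submodule.span ℝ {v : Gg n |
    (v = bY n ∧ w = 1) ∨ ((v = bH n ∨ v = bE n) ∧ w = 0) ∨ (v = bX n ∧ w = -1) ∨
    (∃ p : ℕ, 1 ≤ p ∧ p ≤ 2*n-6 ∧ v = bEps n p ∧ w = (n:ℤ) - 4 - (k:ℤ) - (p:ℤ)) ∨
    (v = bEta n ∧ w = -3 - 2*(k:ℤ))}

/-- The negative part `m = s^{k,n}` of `g` (for `0 ≤ k ≤ n-4`): the span of the basis
elements of negative weight, i.e. of `X`, `ε_p` for `n-3-k ≤ p ≤ 2n-6`, and `η`. -/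
def mSub (n k : ℕ) : Submodule ℝ (Gg n) where
  carrier := {x | x.1 0 = 0 ∧ x.1 1 = 0 ∧ x.1 2 = 0 ∧
    ∀ i : Fin (2*n-6), ((i.val:ℤ) + 1 < (n:ℤ) - 3 - (k:ℤ) → x.2.1 i = 0)}
  add_mem' := by
    rintro a b ⟨ha0, ha1, ha2, ha3⟩ ⟨hb0, hb1, hb2, hb3⟩
    exact ⟨by simp [ha0, hb0], by simp [ha1, hb1], by simp [ha2, hb2],
      fun i hi => by simp [ha3 i hi, hb3 i hi]⟩
  zero_mem' := ⟨rfl, rfl, rfl, fun i _ => rfl⟩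
  smul_mem' := by
    rintro c a ⟨ha0, ha1, ha2, ha3⟩
    exact ⟨by simp [ha0], by simp [ha1], by simp [ha2], fun i hi => by simp [ha3 i hi]⟩

/-- The non-negative part `g⁰` of `g` in the grading of `s^{k,n}`. -/
def g0Sub (n k : ℕ) : Submodule ℝ (Gg n) where
  carrier := {x | x.1 3 = 0 ∧ x.2.2 = 0 ∧
    ∀ i : Fin (2*n-6), ((n:ℤ) - 3 - (k:ℤ) ≤ (i.val:ℤ) + 1 → x.2.1 i = 0)}
  add_mem' := by
    rintro a b ⟨ha0, ha1, ha3⟩ ⟨hb0, hb1, hb3⟩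
    exact ⟨by simp [ha0, hb0], by simp [ha1, hb1], fun i hi => by simp [ha3 i hi, hb3 i hi]⟩
  zero_mem' := ⟨rfl, rfl, fun i _ => rfl⟩
  smul_mem' := by
    rintro c a ⟨ha0, ha1, ha3⟩
    exact ⟨by simp [ha0], by simp [ha1], fun i hi => by simp [ha3 i hi]⟩

/-- The negative part `m` of `g`, as a type. -/
abbrev MT (n k : ℕ) := ↥(mSub n k)

/-- The projection `π_m : g → m` along `g⁰`. -/
def Pm (n k : ℕ) (x : Gg n) : Gg n :=
  (![0, 0, 0, x.1 3],
   (fun i => if (n:ℤ) - 3 - (k:ℤ) ≤ (i.val:ℤ) + 1 then x.2.1 i else 0, x.2.2))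

lemma Pm_mem (n k : ℕ) (x : Gg n) : Pm n k x ∈ mSub n k := by
  refine ⟨?_, ?_, ?_, fun i hi => ?_⟩
  · simp [Pm]
  · simp [Pm]
  · simp [Pm]
  · show (if (n:ℤ) - 3 - (k:ℤ) ≤ (i.val:ℤ) + 1 then x.2.1 i else 0) = 0
    rw [if_neg (by omega)]

/-- The projection `π_m : g → m`, viewed as a map into `m`. -/
def ptoM (n k : ℕ) (x : Gg n) : MT n k := ⟨Pm n k x, Pm_mem n k x⟩

/-- The Lie bracket of `m` (the bracket of `g` restricted to `m`; since `m` is closed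
under the bracket, composing with the projection `π_m` does not change the value). -/
def mBrM (n k : ℕ) (x y : MT n k) : MT n k := ptoM n k (gBr n x.1 y.1)

/-- `ψ` is an ℝ-linear map `m → g`, i.e. an element of `C¹(m,g)`. -/
def IsLin1 (n k : ℕ) (ψ : MT n k → Gg n) : Prop :=
  (∀ x y, ψ (x + y) = ψ x + ψ y) ∧ ∀ (c : ℝ) (x), ψ (c • x) = c • ψ x

/-- `ψ` is an alternating ℝ-bilinear map `m × m → g`, i.e. an element of `C²(m,g)`. -/
def IsAlt2 (n k : ℕ) (ψ : MT n k → MT n k → Gg n) : Prop :=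
  (∀ y, IsLin1 n k (fun x => ψ x y)) ∧ (∀ x, IsLin1 n k (ψ x)) ∧ ∀ x, ψ x x = 0

/-- The coboundary `∂ : C¹(m,g) → C²(m,g)`,
`(∂φ)(x,y) = [x, φ y] - [y, φ x] + φ [x,y]`. -/
def cobound (n k : ℕ) (φ : MT n k → Gg n) : MT n k → MT n k → Gg n :=
  fun x y => gBr n x.1 (φ y) - gBr n y.1 (φ x) + φ (mBrM n k x y)

/-- A 1-cochain is homogeneous of weight `w` if `ψ(g_p) ⊆ g_{p+w}` for all `p < 0`. -/
def Homog1 (n k : ℕ) (w : ℤ) (ψ : MT n k → Gg n) : Prop :=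
  ∀ p : ℤ, p < 0 → ∀ x : MT n k, (x : Gg n) ∈ gComp n k p → ψ x ∈ gComp n k (p + w)

/-- A 2-cochain is homogeneous of weight `w` if `ψ(g_p × g_q) ⊆ g_{p+q+w}` for `p,q < 0`. -/
def Homog2 (n k : ℕ) (w : ℤ) (ψ : MT n k → MT n k → Gg n) : Prop :=
  ∀ p q : ℤ, p < 0 → q < 0 → ∀ x y : MT n k,
    (x : Gg n) ∈ gComp n k p → (y : Gg n) ∈ gComp n k q → ψ x y ∈ gComp n k (p + q + w)

/-- `C¹₊(m,g)`: the span of the homogeneous 1-cochains of positive weight. -/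
def C1plus (n k : ℕ) : Submodule ℝ (MT n k → Gg n) :=
  Submodule.span ℝ {ψ | IsLin1 n k ψ ∧ ∃ w : ℤ, 0 < w ∧ Homog1 n k w ψ}

/-- `C²₊(m,g)`: the span of the homogeneous alternating 2-cochains of positive weight. -/
def C2plus (n k : ℕ) : Submodule ℝ (MT n k → MT n k → Gg n) :=
  Submodule.span ℝ {ψ | IsAlt2 n k ψ ∧ ∃ w : ℤ, 0 < w ∧ Homog2 n k w ψ}

/-- The image `∂(C¹₊(m,g)) ⊆ C²(m,g)`. -/
def imDel (n k : ℕ) : Submodule ℝ (MT n k → MT n k → Gg n) :=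
  Submodule.span ℝ (cobound n k '' {φ | φ ∈ C1plus n k})

/-- The action of `A ∈ g⁰` on 1-cochains: `(A·ψ)(x) = [A, ψ x] - ψ(π_m [A, x])`. -/
def act1 (n k : ℕ) (A : Gg n) (ψ : MT n k → Gg n) : MT n k → Gg n :=
  fun x => gBr n A (ψ x) - ψ (ptoM n k (gBr n A x.1))

/-- The action of `A ∈ g⁰` on 2-cochains:
`(A·ψ)(x,y) = [A, ψ x y] - ψ(π_m [A, x]) y - ψ x (π_m [A, y])`. -/
def act2 (n k : ℕ) (A : Gg n) (ψ : MT n k → MT n k → Gg n) : MT n k → MT n k → Gg n :=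
  fun x y => gBr n A (ψ x y) - ψ (ptoM n k (gBr n A x.1)) y - ψ x (ptoM n k (gBr n A y.1))

/-- The coefficient of `ε_p` (the dual functional `ε*_p`). -/
def epsCoef (n : ℕ) (p : ℕ) (x : Gg n) : ℝ :=
  if h : 1 ≤ p ∧ p ≤ 2*n-6 then x.2.1 ⟨p-1, by omega⟩ else 0

/-- The 1-cochain `ε*_{n-3-k} ⊗ ε_{2n-6}`. -/
def cA (n k : ℕ) : MT n k → Gg n := fun x => epsCoef n (n-3-k) x.1 • bEps n (2*n-6)

/-- The 1-cochain `X* ⊗ ε_{n-4-k}`. -/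
def cB (n k : ℕ) : MT n k → Gg n := fun x => (x : Gg n).1 3 • bEps n (n-4-k)

/-- The 2-cochain `X* ∧ ε*_{n-1+k} ⊗ η`. -/
def cC (n k : ℕ) : MT n k → MT n k → Gg n := fun x y =>
  ((x : Gg n).1 3 * epsCoef n (n-1+k) y.1 - (y : Gg n).1 3 * epsCoef n (n-1+k) x.1) • bEta n

/-- The 2-cochain `ε*_{n-3-k} ∧ η* ⊗ ε_{2n-6}`. -/
def cD (n k : ℕ) : MT n k → MT n k → Gg n := fun x y =>
  (epsCoef n (n-3-k) x.1 * (y : Gg n).2.2 - epsCoef n (n-3-k) y.1 * (x : Gg n).2.2) • bEps n (2*n-6)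

/-- `D : m → m` is an ℝ-linear map. -/
def IsLinM (n k : ℕ) (D : MT n k → MT n k) : Prop :=
  (∀ x y, D (x + y) = D x + D y) ∧ ∀ (c : ℝ) (x), D (c • x) = c • D x

/-- `D` is a degree-0 derivation of `m` (with the grading of `s^{n-4,n}`, i.e.
`wght X = -1`, `wght ε_i = -i`, `wght η = 5-2n`): `D` is linear, preserves every graded
component of `m`, and satisfies the Leibniz rule.  The space of such `D` is `g_0`. -/
def IsDer0 (n : ℕ) (D : MT n (n-4) → MT n (n-4)) : Prop :=
  IsLinM n (n-4) D ∧
  (∀ w : ℤ, ∀ x : MT n (n-4),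
    (x : Gg n) ∈ gComp n (n-4) w → (D x : Gg n) ∈ gComp n (n-4) w) ∧
  ∀ x y, D (mBrM n (n-4) x y) = mBrM n (n-4) (D x) y + mBrM n (n-4) x (D y)

/-- An element of the first prolongation `g_1`: a linear map `u : m → m ⊕ g_0`,
encoded as the pair `p = (u_m, u_0)` of its two components (an element `d ∈ g_0` is
recorded through its action `d : m → m`).  The conditions say: `u` is linear,
`u(m_{-1}) ⊆ g_0`, `u(m_{-j}) ⊆ m_{1-j}` for `j ≥ 2`, and
`u([x,y]) = ⟦u(x), y⟧ + ⟦x, u(y)⟧` (separated into its `m`- and `g_0`-components),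
where `⟦d, y⟧ = d(y) = -⟦y, d⟧` for `d ∈ g_0`, `y ∈ m`. -/
def IsG1 (n : ℕ)
    (p : (MT n (n-4) → MT n (n-4)) × (MT n (n-4) → MT n (n-4) → MT n (n-4))) : Prop :=
  IsLinM n (n-4) p.1 ∧
  (∀ x x', p.2 (x + x') = p.2 x + p.2 x') ∧
  (∀ (c : ℝ) (x), p.2 (c • x) = c • p.2 x) ∧
  (∀ x, IsDer0 n (p.2 x)) ∧
  (∀ x : MT n (n-4), (x : Gg n) ∈ gComp n (n-4) (-1) → p.1 x = 0) ∧
  (∀ j : ℤ, j ≤ -2 → ∀ x : MT n (n-4), (x : Gg n) ∈ gComp n (n-4) j →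
    (p.1 x : Gg n) ∈ gComp n (n-4) (j + 1) ∧ p.2 x = 0) ∧
  (∀ x y, p.1 (mBrM n (n-4) x y) =
    mBrM n (n-4) (p.1 x) y + p.2 x y + mBrM n (n-4) x (p.1 y) - p.2 y x) ∧
  (∀ x y, p.2 (mBrM n (n-4) x y) = 0)

/-- An element of the second prolongation `g_2`: a linear map `w : m → m ⊕ g_0 ⊕ g_1`,
encoded as the triple `t = (w_m, w_0, w_1)` of its components.  The conditions say:
`w` is linear, `w(m_{-1}) ⊆ g_1`, `w(m_{-2}) ⊆ g_0`, `w(m_{-j}) ⊆ m_{2-j}` for `j ≥ 3`,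
`w` takes values in `m ⊕ g_0 ⊕ g_1`, and `w([x,y]) = ⟦w(x), y⟧ + ⟦x, w(y)⟧`
(separated into its `m`-, `g_0`- and `g_1`-components), where additionally
`⟦u, y⟧ = u(y) = -⟦y, u⟧ ∈ m ⊕ g_0` for `u ∈ g_1`, `y ∈ m`. -/
def IsG2 (n : ℕ)
    (t : (MT n (n-4) → MT n (n-4)) × (MT n (n-4) → MT n (n-4) → MT n (n-4)) ×
         (MT n (n-4) → (MT n (n-4) → MT n (n-4)) × (MT n (n-4) → MT n (n-4) → MT n (n-4)))) :
    Prop :=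
  IsLinM n (n-4) t.1 ∧
  (∀ x x', t.2.1 (x + x') = t.2.1 x + t.2.1 x') ∧
  (∀ (c : ℝ) (x), t.2.1 (c • x) = c • t.2.1 x) ∧
  (∀ x x', t.2.2 (x + x') = t.2.2 x + t.2.2 x') ∧
  (∀ (c : ℝ) (x), t.2.2 (c • x) = c • t.2.2 x) ∧
  (∀ x, IsDer0 n (t.2.1 x)) ∧
  (∀ x, IsG1 n (t.2.2 x)) ∧
  (∀ x : MT n (n-4), (x : Gg n) ∈ gComp n (n-4) (-1) → t.1 x = 0 ∧ t.2.1 x = 0) ∧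
  (∀ x : MT n (n-4), (x : Gg n) ∈ gComp n (n-4) (-2) → t.1 x = 0 ∧ t.2.2 x = 0) ∧
  (∀ j : ℤ, j ≤ -3 → ∀ x : MT n (n-4), (x : Gg n) ∈ gComp n (n-4) j →
    (t.1 x : Gg n) ∈ gComp n (n-4) (j + 2) ∧ t.2.1 x = 0 ∧ t.2.2 x = 0) ∧
  (∀ x y, t.1 (mBrM n (n-4) x y) =
    mBrM n (n-4) (t.1 x) y + t.2.1 x y + (t.2.2 x).1 y
      + mBrM n (n-4) x (t.1 y) - t.2.1 y x - (t.2.2 y).1 x) ∧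
  (∀ x y, t.2.1 (mBrM n (n-4) x y) = fun z => (t.2.2 x).2 y z - (t.2.2 y).2 x z) ∧
  (∀ x y, t.2.2 (mBrM n (n-4) x y) = 0)

/-- The `m`-component of the map `u_Y`: `X ↦ 0`, `ε_1 ↦ 0`,
`ε_i ↦ (i-1)(2n-5-i)·ε_{i-1}` for `2 ≤ i ≤ 2n-6`, `η ↦ 0` (this is `φ(Y)` on the
Heisenberg part of `m`). -/
def uYm (n : ℕ) : MT n (n-4) → MT n (n-4) :=
  fun x => ptoM n (n-4) ((0 : G2), phi n ![1,0,0,0] (x : Gg n).2)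

/-- The `g_0`-component of the map `u_Y`: `X ↦ -(ad H)|_m`, and `0` on `ε_i`, `η`. -/
def uY0 (n : ℕ) : MT n (n-4) → MT n (n-4) → MT n (n-4) :=
  fun x y => (-(x : Gg n).1 3) • ptoM n (n-4) (gBr n (bH n) (y : Gg n))


-- ===================== Infrastructure =====================

section Infra

variable {n : ℕ}

/-- Constructor for elements of `m`. -/
def mkM (n : ℕ) (s : ℝ) (u : Fin (2*n-6) → ℝ) (h : ℝ) : MT n (n-4) :=
  ⟨(![0,0,0,s], u, h), by
    refine ⟨rfl, rfl, rfl, fun i hi => absurd hi (by omega)⟩⟩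

def cX (x : MT n (n-4)) : ℝ := (x : Gg n).1 3
def cE (x : MT n (n-4)) (i : Fin (2*n-6)) : ℝ := (x : Gg n).2.1 i
def cH (x : MT n (n-4)) : ℝ := (x : Gg n).2.2

@[simp] lemma cX_mkM (s u h) : cX (mkM n s u h) = s := rfl
@[simp] lemma cE_mkM (s u h) (i) : cE (mkM n s u h) i = u i := rfl
@[simp] lemma cH_mkM (s u h) : cH (mkM n s u h) = h := rfl

lemma mext {x y : MT n (n-4)} (h1 : cX x = cX y) (h2 : ∀ i, cE x i = cE y i)
    (h3 : cH x = cH y) : x = y := by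
  obtain ⟨hx0, hx1, hx2, -⟩ := x.2
  obtain ⟨hy0, hy1, hy2, -⟩ := y.2
  apply Subtype.ext
  refine Prod.ext ?_ (Prod.ext (funext h2) h3)
  funext j
  fin_cases j
  · exact hx0.trans hy0.symm
  · exact hx1.trans hy1.symm
  · exact hx2.trans hy2.symm
  · exact h1

@[simp] lemma cX_add (x y : MT n (n-4)) : cX (x + y) = cX x + cX y := rfl
@[simp] lemma cE_add (x y : MT n (n-4)) (i) : cE (x + y) i = cE x i + cE y i := rfl
@[simp] lemma cH_add (x y : MT n (n-4)) : cH (x + y) = cH x + cH y := rfl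
@[simp] lemma cX_smul (c : ℝ) (x : MT n (n-4)) : cX (c • x) = c * cX x := rfl
@[simp] lemma cE_smul (c : ℝ) (x : MT n (n-4)) (i) : cE (c • x) i = c * cE x i := rfl
@[simp] lemma cH_smul (c : ℝ) (x : MT n (n-4)) : cH (c • x) = c * cH x := rfl
@[simp] lemma cX_neg (x : MT n (n-4)) : cX (-x) = - cX x := rfl
@[simp] lemma cE_neg (x : MT n (n-4)) (i) : cE (-x) i = - cE x i := rfl
@[simp] lemma cH_neg (x : MT n (n-4)) : cH (-x) = - cH x := rfl
@[simp] lemma cX_sub (x y : MT n (n-4)) : cX (x - y) = cX x - cX y := rfl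
@[simp] lemma cE_sub (x y : MT n (n-4)) (i) : cE (x - y) i = cE x i - cE y i := rfl
@[simp] lemma cH_sub (x y : MT n (n-4)) : cH (x - y) = cH x - cH y := rfl
@[simp] lemma cX_zero : cX (0 : MT n (n-4)) = 0 := rfl
@[simp] lemma cE_zero (i) : cE (0 : MT n (n-4)) i = 0 := rfl
@[simp] lemma cH_zero : cH (0 : MT n (n-4)) = 0 := rfl

/-- basis of m -/
def eX (n : ℕ) : MT n (n-4) := mkM n 1 0 0
def eE (n : ℕ) (p : ℕ) : MT n (n-4) :=
  mkM n 0 (fun i => if i.val + 1 = p then 1 else 0) 0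
def eHe (n : ℕ) : MT n (n-4) := mkM n 0 0 1

@[simp] lemma cX_eX : cX (eX n) = 1 := rfl
@[simp] lemma cE_eX (i) : cE (eX n) i = 0 := rfl
@[simp] lemma cH_eX : cH (eX n) = 0 := rfl
@[simp] lemma cX_eE (p) : cX (eE n p) = 0 := rfl
@[simp] lemma cE_eE (p) (i) : cE (eE n p) i = if i.val + 1 = p then 1 else 0 := rfl
@[simp] lemma cH_eE (p) : cH (eE n p) = 0 := rfl
@[simp] lemma cX_eHe : cX (eHe n) = 0 := rfl
@[simp] lemma cE_eHe (i) : cE (eHe n) i = 0 := rfl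
@[simp] lemma cH_eHe : cH (eHe n) = 1 := rfl

lemma coe_eX : ((eX n : MT n (n-4)) : Gg n) = bX n := by
  refine Prod.ext ?_ rfl
  funext j; fin_cases j <;> rfl

lemma coe_eE (p : ℕ) : ((eE n p : MT n (n-4)) : Gg n) = bEps n p := by
  refine Prod.ext ?_ rfl
  funext j; fin_cases j <;> rfl

lemma coe_eHe : ((eHe n : MT n (n-4)) : Gg n) = bEta n := by
  refine Prod.ext ?_ (Prod.ext rfl rfl)
  funext j; fin_cases j <;> rfl


/-! ### Projection and bracket in coordinates -/

@[simp] lemma cX_ptoM (z : Gg n) : cX (ptoM n (n-4) z) = z.1 3 := rfl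
@[simp] lemma cE_ptoM (z : Gg n) (i) : cE (ptoM n (n-4) z) i = z.2.1 i := by
  show (if ((n:ℤ) - 3 - ((n-4:ℕ):ℤ) ≤ (i:ℤ) + 1) then z.2.1 i else 0) = z.2.1 i
  exact if_pos (by omega)
@[simp] lemma cH_ptoM (z : Gg n) : cH (ptoM n (n-4) z) = z.2.2 := rfl

def shf (n : ℕ) (v : Fin (2*n-6) → ℝ) (i : Fin (2*n-6)) : ℝ :=
  if h : 0 < i.val then v ⟨i.val - 1, by omega⟩ else 0

def Bf (n : ℕ) (u v : Fin (2*n-6) → ℝ) : ℝ :=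
  ∑ i : Fin (2*n-6), (-1 : ℝ)^(i.val+1) * u i * v i.rev

lemma shf_smul (c : ℝ) (v : Fin (2*n-6) → ℝ) (i) :
    shf n (fun j => c * v j) i = c * shf n v i := by
  unfold shf; split <;> simp

lemma shf_add (u v : Fin (2*n-6) → ℝ) (i) :
    shf n (fun j => u j + v j) i = shf n u i + shf n v i := by
  unfold shf; split <;> simp

lemma shf_zero (i) : shf n (fun _ => (0:ℝ)) i = 0 := by
  unfold shf; split <;> simp

lemma Bf_smul_left (c : ℝ) (u v : Fin (2*n-6) → ℝ) :
    Bf n (fun j => c * u j) v = c * Bf n u v := by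
  unfold Bf; rw [Finset.mul_sum]; exact Finset.sum_congr rfl fun i _ => by ring

lemma Bf_smul_right (c : ℝ) (u v : Fin (2*n-6) → ℝ) :
    Bf n u (fun j => c * v j) = c * Bf n u v := by
  unfold Bf; rw [Finset.mul_sum]; exact Finset.sum_congr rfl fun i _ => by ring

lemma Bf_add_left (u u' v : Fin (2*n-6) → ℝ) :
    Bf n (fun j => u j + u' j) v = Bf n u v + Bf n u' v := by
  unfold Bf; rw [← Finset.sum_add_distrib]; exact Finset.sum_congr rfl fun i _ => by ring

lemma Bf_add_right (u v v' : Fin (2*n-6) → ℝ) :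
    Bf n u (fun j => v j + v' j) = Bf n u v + Bf n u v' := by
  unfold Bf; rw [← Finset.sum_add_distrib]; exact Finset.sum_congr rfl fun i _ => by ring

lemma Bf_zero_left (v : Fin (2*n-6) → ℝ) : Bf n (fun _ => 0) v = 0 := by
  unfold Bf; exact Finset.sum_eq_zero fun i _ => by ring

lemma Bf_zero_right (u : Fin (2*n-6) → ℝ) : Bf n u (fun _ => 0) = 0 := by
  unfold Bf; exact Finset.sum_eq_zero fun i _ => by ring

lemma cE_fun_smul (c : ℝ) (x : MT n (n-4)) : cE (c • x) = fun i => c * cE x i := rfl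
lemma cE_fun_add (x y : MT n (n-4)) : cE (x + y) = fun i => cE x i + cE y i := rfl
lemma cE_fun_zero : cE (0 : MT n (n-4)) = fun _ => (0:ℝ) := rfl

lemma mBr_eq (x y : MT n (n-4)) :
    mBrM n (n-4) x y = mkM n 0
      (fun i => cX x * shf n (cE y) i - cX y * shf n (cE x) i)
      (Bf n (cE x) (cE y)) := by
  obtain ⟨hx0, hx1, hx2, -⟩ := x.2
  obtain ⟨hy0, hy1, hy2, -⟩ := y.2
  have e1 : cX (mBrM n (n-4) x y) = (gBr n (x:Gg n) (y:Gg n)).1 3 := rfl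
  have e2 : ∀ i, cE (mBrM n (n-4) x y) i = (gBr n (x:Gg n) (y:Gg n)).2.1 i :=
    fun i => cE_ptoM _ i
  have e3 : cH (mBrM n (n-4) x y) = (gBr n (x:Gg n) (y:Gg n)).2.2 := rfl
  apply mext
  · rw [e1, cX_mkM]
    simp [gBr, gl2Br, hx1, hy1]
  · intro i
    rw [e2 i, cE_mkM]
    simp only [gBr, phi, heisBr, Pi.add_apply, Pi.sub_apply, Prod.fst_add, Prod.snd_add,
      Prod.fst_sub, Prod.snd_sub]
    simp only [hx0, hx1, hx2, hy0, hy1, hy2, cX, cE, shf, Pi.zero_apply]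
    ring
  · rw [e3, cH_mkM]
    simp only [gBr, heisBr, phi, Prod.snd_add, Prod.snd_sub, Pi.add_apply, Pi.sub_apply]
    simp only [hx2, hy2, cE, Bf]
    ring

lemma br_mkM (s : ℝ) (u) (h : ℝ) (s' : ℝ) (v) (h' : ℝ) :
    mBrM n (n-4) (mkM n s u h) (mkM n s' v h') =
      mkM n 0 (fun i => s * shf n v i - s' * shf n u i) (Bf n u v) :=
  mBr_eq _ _

lemma br_smul_left (c : ℝ) (x y : MT n (n-4)) :
    mBrM n (n-4) (c • x) y = c • mBrM n (n-4) x y := by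
  apply mext
  · simp [mBr_eq]
  · intro i
    simp [mBr_eq, cE_fun_smul, shf_smul]; ring
  · simp [mBr_eq, cE_fun_smul, Bf_smul_left]

lemma br_smul_right (c : ℝ) (x y : MT n (n-4)) :
    mBrM n (n-4) x (c • y) = c • mBrM n (n-4) x y := by
  apply mext
  · simp [mBr_eq]
  · intro i
    simp [mBr_eq, cE_fun_smul, shf_smul]; ring
  · simp [mBr_eq, cE_fun_smul, Bf_smul_right]

lemma br_add_left (x x' y : MT n (n-4)) :
    mBrM n (n-4) (x + x') y = mBrM n (n-4) x y + mBrM n (n-4) x' y := by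
  apply mext
  · simp [mBr_eq]
  · intro i
    simp [mBr_eq, cE_fun_add, shf_add]; ring
  · simp [mBr_eq, cE_fun_add, Bf_add_left]

lemma br_add_right (x y y' : MT n (n-4)) :
    mBrM n (n-4) x (y + y') = mBrM n (n-4) x y + mBrM n (n-4) x y' := by
  apply mext
  · simp [mBr_eq]
  · intro i
    simp [mBr_eq, cE_fun_add, shf_add]; ring
  · simp [mBr_eq, cE_fun_add, Bf_add_right]

lemma br_zero_left (y : MT n (n-4)) : mBrM n (n-4) 0 y = 0 := by
  have := br_smul_left (n := n) 0 0 y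
  simpa using this

lemma br_zero_right (x : MT n (n-4)) : mBrM n (n-4) x 0 = 0 := by
  have := br_smul_right (n := n) 0 x 0
  simpa using this

/-! ### brackets of basis elements -/

lemma br_eX_eE (p : ℕ) (h1 : 1 ≤ p) (h2 : p ≤ 2*n-7) :
    mBrM n (n-4) (eX n) (eE n p) = eE n (p+1) := by
  apply mext
  · simp [mBr_eq]
  · intro i
    simp only [mBr_eq, cE_mkM, cX_eX, cX_eE, cE_eE]
    unfold shf
    split
    · simp only [cE_eE]
      split_ifs <;> simp_all <;> omega
    · rw [if_neg (by omega)]; ring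
  · simp only [mBr_eq, cH_mkM, cH_eE]
    have : Bf n (cE (eX n)) (cE (eE n p)) = 0 := Bf_zero_left _
    simpa using this

lemma br_eX_eE_top (hn : 6 ≤ n) : mBrM n (n-4) (eX n) (eE n (2*n-6)) = 0 := by
  apply mext
  · simp [mBr_eq]
  · intro i
    simp only [mBr_eq, cE_mkM, cX_eX, cX_eE, cE_zero]
    unfold shf
    split
    · simp only [cE_eE]
      rw [if_neg (by omega)]; ring
    · ring
  · simp only [mBr_eq, cH_mkM, cH_zero]
    exact Bf_zero_left _

lemma br_eX_eX : mBrM n (n-4) (eX n) (eX n) = 0 := by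
  apply mext
  · simp [mBr_eq]
  · intro i
    simp [mBr_eq, show cE (eX n) = fun _ => (0:ℝ) from rfl, shf_zero]
  · simp [mBr_eq, show cE (eX n) = fun _ => (0:ℝ) from rfl, Bf_zero_left]

lemma br_x_eHe (x : MT n (n-4)) : mBrM n (n-4) x (eHe n) = 0 := by
  apply mext
  · simp [mBr_eq]
  · intro i
    simp [mBr_eq, show cE (eHe n) = fun _ => (0:ℝ) from rfl, shf_zero]
  · simp [mBr_eq, show cE (eHe n) = fun _ => (0:ℝ) from rfl, Bf_zero_right]

lemma br_eHe_x (x : MT n (n-4)) : mBrM n (n-4) (eHe n) x = 0 := by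
  apply mext
  · simp [mBr_eq]
  · intro i
    simp [mBr_eq, show cE (eHe n) = fun _ => (0:ℝ) from rfl, shf_zero]
  · simp [mBr_eq, show cE (eHe n) = fun _ => (0:ℝ) from rfl, Bf_zero_left]

lemma br_eE_eE (p q : ℕ) (hpq : p + q ≠ 2*n-5) (hq : 1 ≤ q) :
    mBrM n (n-4) (eE n p) (eE n q) = 0 := by
  apply mext
  · simp [mBr_eq]
  · intro i; simp [mBr_eq]
  · simp only [mBr_eq, cH_mkM, cH_zero]
    refine Finset.sum_eq_zero fun i _ => ?_
    simp only [cE_eE]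
    rcases eq_or_ne (i.val + 1) p with h | h
    · rw [if_pos h]
      rw [if_neg ?_]
      · ring
      · have hrev : (i.rev : ℕ) = 2*n-6-(i.val+1) := Fin.val_rev i
        omega
    · rw [if_neg h]; ring

lemma br_eE1_eEtop (hn : 6 ≤ n) :
    mBrM n (n-4) (eE n 1) (eE n (2*n-6)) = -(eHe n) := by
  apply mext
  · simp [mBr_eq]
  · intro i; simp [mBr_eq]
  · simp only [mBr_eq, cH_mkM, cH_neg, cH_eHe]
    unfold Bf
    have key : ∀ b : Fin (2*n-6), (-1:ℝ)^(b.val+1) * cE (eE n 1) b * cE (eE n (2*n-6)) b.rev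
        = if b.val = 0 then -1 else 0 := by
      intro b
      have hb := b.isLt
      simp only [cE_eE]
      rcases eq_or_ne b.val 0 with h | h
      · rw [if_pos (by omega), if_pos (by rw [Fin.val_rev]; omega), if_pos h, h]
        norm_num
      · rw [if_neg (by omega), if_neg h]
        ring
    show Bf n (cE (eE n 1)) (cE (eE n (2*n-6))) = -1
    unfold Bf
    rw [Finset.sum_congr rfl fun b _ => key b,
      Finset.sum_eq_single (⟨0, by omega⟩ : Fin (2*n-6))]
    · exact if_pos rfl
    · intro b _ hb
      exact if_neg (fun h => hb (Fin.ext h))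
    · intro h; exact absurd (Finset.mem_univ _) h

/-! ### linear functionals on Gg and gComp facts -/

def fXl (n : ℕ) : Gg n →ₗ[ℝ] ℝ := (LinearMap.proj 3).comp (LinearMap.fst ℝ G2 (Hs n))
def fEl (n : ℕ) (i : Fin (2*n-6)) : Gg n →ₗ[ℝ] ℝ :=
  (LinearMap.proj i).comp ((LinearMap.fst ℝ _ ℝ).comp (LinearMap.snd ℝ G2 (Hs n)))
def fHl (n : ℕ) : Gg n →ₗ[ℝ] ℝ := (LinearMap.snd ℝ _ ℝ).comp (LinearMap.snd ℝ G2 (Hs n))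

lemma gComp_vanish_X (hn : 6 ≤ n) {w : ℤ} {x : Gg n} (hx : x ∈ gComp n (n-4) w)
    (hw : w ≠ -1) : x.1 3 = 0 := by
  have hle : gComp n (n-4) w ≤ LinearMap.ker (fXl n) := by
    rw [gComp, Submodule.span_le]
    rintro v (⟨rfl, rfl⟩ | ⟨(rfl | rfl), rfl⟩ | ⟨rfl, hw'⟩ | ⟨p, hp1, hp2, rfl, rfl⟩ | ⟨rfl, rfl⟩) <;>
      first
        | (exact absurd hw' hw)
        | (simp [LinearMap.mem_ker, fXl, bY, bH, bE, bX, bEps, bEta])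
  exact hle hx

lemma gComp_vanish_E (hn : 6 ≤ n) {w : ℤ} {x : Gg n} (hx : x ∈ gComp n (n-4) w)
    (i : Fin (2*n-6)) (hw : w ≠ -((i:ℕ) + 1 : ℤ)) : x.2.1 i = 0 := by
  have hle : gComp n (n-4) w ≤ LinearMap.ker (fEl n i) := by
    rw [gComp, Submodule.span_le]
    rintro v hv
    simp only [SetLike.mem_coe, LinearMap.mem_ker]
    obtain (⟨rfl, rfl⟩ | ⟨(rfl | rfl), rfl⟩ | ⟨rfl, rfl⟩ | ⟨p, hp1, hp2, rfl, rfl⟩ | ⟨rfl, rfl⟩) := hv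
    · rfl
    · rfl
    · rfl
    · rfl
    · show (if (i:ℕ) + 1 = p then (1:ℝ) else 0) = 0
      rw [if_neg]
      intro h'
      exact hw (by omega)
    · rfl
  exact hle hx

lemma gComp_vanish_H (hn : 6 ≤ n) {w : ℤ} {x : Gg n} (hx : x ∈ gComp n (n-4) w)
    (hw : w ≠ 5 - 2*(n:ℤ)) : x.2.2 = 0 := by
  have hle : gComp n (n-4) w ≤ LinearMap.ker (fHl n) := by
    rw [gComp, Submodule.span_le]
    rintro v (⟨rfl, rfl⟩ | ⟨(rfl | rfl), rfl⟩ | ⟨rfl, rfl⟩ | ⟨p, hp1, hp2, rfl, rfl⟩ | ⟨rfl, hw'⟩) <;>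
      first
        | (exact absurd (by omega : w = 5 - 2*(n:ℤ)) hw)
        | rfl
  exact hle hx

lemma bX_mem (hn : 6 ≤ n) : bX n ∈ gComp n (n-4) (-1) :=
  Submodule.subset_span (Or.inr (Or.inr (Or.inl ⟨rfl, rfl⟩)))

lemma bEps_mem (hn : 6 ≤ n) (p : ℕ) (h1 : 1 ≤ p) (h2 : p ≤ 2*n-6) :
    bEps n p ∈ gComp n (n-4) (-(p:ℤ)) :=
  Submodule.subset_span (Or.inr (Or.inr (Or.inr (Or.inl ⟨p, h1, h2, rfl, by omega⟩))))

lemma bEta_mem (hn : 6 ≤ n) : bEta n ∈ gComp n (n-4) (5 - 2*(n:ℤ)) :=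
  Submodule.subset_span (Or.inr (Or.inr (Or.inr (Or.inr ⟨rfl, by omega⟩))))

lemma coord_E_apply {x : MT n (n-4)} (i : Fin (2*n-6)) : ((x : Gg n)).2.1 i = cE x i := rfl

lemma eq_comb_m1 (hn : 6 ≤ n) {x : MT n (n-4)} (hx : (x : Gg n) ∈ gComp n (n-4) (-1)) :
    x = cX x • eX n + cE x ⟨0, by omega⟩ • eE n 1 := by
  apply mext
  · simp
  · intro i
    rcases eq_or_ne i.val 0 with h | h
    · rw [show i = ⟨0, by omega⟩ from Fin.ext h]
      simp
    · have h0 : cE x i = 0 := gComp_vanish_E hn hx i (by omega)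
      simp only [cE_add, cE_smul, cE_eE, cE_eX]
      rw [h0, if_neg (by omega)]
      ring
  · have : cH x = 0 := gComp_vanish_H hn hx (by omega)
    simp [this]

lemma eq_smul_eE (hn : 6 ≤ n) {x : MT n (n-4)} {p : ℕ} (h2 : 2 ≤ p) (h3 : p ≤ 2*n-6)
    (hx : (x : Gg n) ∈ gComp n (n-4) (-(p:ℤ))) :
    x = cE x ⟨p-1, by omega⟩ • eE n p := by
  apply mext
  · have : cX x = 0 := gComp_vanish_X hn hx (by omega)
    simp [this]
  · intro i
    rcases eq_or_ne i.val (p-1) with h | h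
    · rw [show i = ⟨p-1, by omega⟩ from Fin.ext h]
      simp only [cE_smul, cE_eE]
      rw [if_pos (by omega)]
      ring
    · have h0 : cE x i = 0 := gComp_vanish_E hn hx i (by omega)
      simp only [cE_smul, cE_eE]
      rw [h0, if_neg (by omega)]
      ring
  · have : cH x = 0 := gComp_vanish_H hn hx (by omega)
    simp [this]

lemma eq_smul_eHe (hn : 6 ≤ n) {x : MT n (n-4)}
    (hx : (x : Gg n) ∈ gComp n (n-4) (5 - 2*(n:ℤ))) :
    x = cH x • eHe n := by
  apply mext
  · have : cX x = 0 := gComp_vanish_X hn hx (by omega)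
    simp [this]
  · intro i
    have h0 : cE x i = 0 := gComp_vanish_E hn hx i (by omega)
    simp [h0]
  · simp

lemma eq_zero_of_mem (hn : 6 ≤ n) {w : ℤ} {x : MT n (n-4)}
    (hw1 : w ≠ -1) (hw2 : ∀ p : ℕ, 2 ≤ p → p ≤ 2*n-6 → w ≠ -(p:ℤ)) (hw3 : w ≠ 5 - 2*(n:ℤ))
    (hx : (x : Gg n) ∈ gComp n (n-4) w) : x = 0 := by
  apply mext
  · simp only [cX_zero]
    exact gComp_vanish_X hn hx hw1
  · intro i
    simp only [cE_zero]
    rcases eq_or_ne i.val 0 with h | h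
    · exact gComp_vanish_E hn hx i (by omega)
    · have := hw2 (i.val+1) (by omega) (by omega)
      exact gComp_vanish_E hn hx i (by omega)
  · simp only [cH_zero]
    exact gComp_vanish_H hn hx hw3

/-! ### expansion in the basis and linear extensionality -/

lemma lin_val {M : Type*} [AddCommGroup M] [Module ℝ M] (F : MT n (n-4) → M)
    (ha : ∀ x y, F (x + y) = F x + F y) (hs : ∀ (c : ℝ) x, F (c • x) = c • F x)
    (x : MT n (n-4)) :
    F x = cX x • F (eX n) + (∑ i : Fin (2*n-6), cE x i • F (eE n (i.val+1)))
      + cH x • F (eHe n) := by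
  have h0 : F 0 = 0 := by
    have := hs 0 0; simpa using this
  have hsum : ∀ (s : Finset (Fin (2*n-6))) (v : Fin (2*n-6) → MT n (n-4)),
      F (∑ i ∈ s, v i) = ∑ i ∈ s, F (v i) := by
    intro s v
    induction s using Finset.induction with
    | empty => simpa using h0
    | insert _ _ hni ih =>
        rw [Finset.sum_insert hni, ha, ih, Finset.sum_insert hni]
  have hx : x = cX x • eX n + (∑ i : Fin (2*n-6), cE x i • eE n (i.val+1)) + cH x • eHe n := by
    apply mext
    · have : cX (∑ i : Fin (2*n-6), cE x i • eE n (i.val+1)) = 0 := by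
        rw [show cX (∑ i : Fin (2*n-6), cE x i • eE n (i.val+1))
              = ∑ i : Fin (2*n-6), cX (cE x i • eE n (i.val+1)) from
            map_sum (⟨⟨cX, fun _ _ => rfl⟩, fun _ _ => rfl⟩ : MT n (n-4) →ₗ[ℝ] ℝ) _ _]
        simp
      simp [this]
    · intro j
      have hs1 : cE (∑ i : Fin (2*n-6), cE x i • eE n (i.val+1)) j
          = ∑ i : Fin (2*n-6), cE (cE x i • eE n (i.val+1)) j :=
        map_sum (⟨⟨(cE · j), fun _ _ => rfl⟩, fun _ _ => rfl⟩ : MT n (n-4) →ₗ[ℝ] ℝ) _ _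
      simp only [cE_add, cE_smul, cE_eX, cE_eHe, hs1, cE_eE]
      have : ∀ i : Fin (2*n-6), cE x i * (if j.val + 1 = i.val + 1 then (1:ℝ) else 0)
          = if i = j then cE x i else 0 := by
        intro i
        rcases eq_or_ne i j with h | h
        · subst h; simp
        · rw [if_neg h, if_neg (by simpa [Fin.ext_iff] using fun hh => h (Fin.ext (by omega)))]
          ring
      rw [Finset.sum_congr rfl fun i _ => this i, Finset.sum_ite_eq' Finset.univ j]
      simp
    · have : cH (∑ i : Fin (2*n-6), cE x i • eE n (i.val+1)) = 0 := by
        rw [show cH (∑ i : Fin (2*n-6), cE x i • eE n (i.val+1))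
              = ∑ i : Fin (2*n-6), cH (cE x i • eE n (i.val+1)) from
            map_sum (⟨⟨cH, fun _ _ => rfl⟩, fun _ _ => rfl⟩ : MT n (n-4) →ₗ[ℝ] ℝ) _ _]
        simp
      simp [this]
  conv_lhs => rw [hx]
  rw [ha, ha, hsum, hs, hs]
  congr 1
  congr 1
  exact Finset.sum_congr rfl fun i _ => hs _ _

lemma lin_ext {M : Type*} [AddCommGroup M] [Module ℝ M] {f g : MT n (n-4) → M}
    (hfa : ∀ x y, f (x + y) = f x + f y) (hfs : ∀ (c : ℝ) x, f (c • x) = c • f x)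
    (hga : ∀ x y, g (x + y) = g x + g y) (hgs : ∀ (c : ℝ) x, g (c • x) = c • g x)
    (h1 : f (eX n) = g (eX n))
    (h2 : ∀ p : ℕ, 1 ≤ p → p ≤ 2*n-6 → f (eE n p) = g (eE n p))
    (h3 : f (eHe n) = g (eHe n)) : f = g := by
  funext x
  rw [lin_val f hfa hfs x, lin_val g hga hgs x, h1, h3]
  congr 2
  exact Finset.sum_congr rfl fun i _ => by
    rw [h2 (i.val+1) (by omega) (by omega)]


/-! ### the model degree-0 derivations -/

lemma rev_cast (hn : 6 ≤ n) (i : Fin (2*n-6)) :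
    ((i.rev : ℕ) : ℝ) = 2*(n:ℝ) - 7 - (i.val:ℝ) := by
  have h := Fin.val_rev i
  have hb := i.isLt
  rw [h, Nat.cast_sub (by omega), Nat.cast_sub (by omega : 6 ≤ 2*n)]
  push_cast
  ring

def derF (n : ℕ) (a d : ℝ) (y : MT n (n-4)) : MT n (n-4) :=
  mkM n (a * cX y) (fun i => ((i:ℝ) * a + d) * cE y i) (((2*(n:ℝ)-7) * a + 2*d) * cH y)

@[simp] lemma cX_derF (a d y) : cX (derF n a d y) = a * cX y := rfl
@[simp] lemma cE_derF (a d y i) : cE (derF n a d y) i = ((i:ℝ) * a + d) * cE y i := rfl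
@[simp] lemma cH_derF (a d y) : cH (derF n a d y) = ((2*(n:ℝ)-7) * a + 2*d) * cH y := rfl

lemma cE_fun_derF (a d y) :
    cE (derF n a d y) = fun i : Fin (2*n-6) => ((i:ℝ) * a + d) * cE y i := rfl

lemma derF_add (a d : ℝ) (x y : MT n (n-4)) :
    derF n a d (x + y) = derF n a d x + derF n a d y := by
  apply mext
  · simp; ring
  · intro i; simp; ring
  · simp; ring

lemma derF_smul (a d c : ℝ) (x : MT n (n-4)) :
    derF n a d (c • x) = c • derF n a d x := by
  apply mext
  · simp; ring
  · intro i; simp; ring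
  · simp; ring

lemma derF_zero (a d : ℝ) : derF n a d (0 : MT n (n-4)) = 0 := by
  apply mext <;> simp

lemma derF_eX (a d : ℝ) : derF n a d (eX n) = a • eX n := by
  apply mext <;> simp

lemma derF_eE (a d : ℝ) (p : ℕ) (h1 : 1 ≤ p) :
    derF n a d (eE n p) = (((p:ℝ)-1) * a + d) • eE n p := by
  apply mext
  · simp
  · intro i
    simp only [cE_derF, cE_smul, cE_eE]
    rcases eq_or_ne (i.val + 1) p with h | h
    · rw [if_pos h]
      have hc : ((i:ℕ):ℝ) + 1 = (p:ℝ) := by exact_mod_cast congrArg (Nat.cast : ℕ → ℝ) h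
      rw [show ((i:ℕ):ℝ) = (p:ℝ) - 1 by linarith]
    · rw [if_neg h]
      ring
  · simp

lemma derF_eHe (a d : ℝ) : derF n a d (eHe n) = ((2*(n:ℝ)-7) * a + 2*d) • eHe n := by
  apply mext <;> simp

lemma shf_val_zero {v : Fin (2*n-6) → ℝ} {i : Fin (2*n-6)} (h : ¬ 0 < i.val) :
    shf n v i = 0 := by
  unfold shf; rw [dif_neg h]

lemma shf_coef (F : ℕ → ℝ) (v : Fin (2*n-6) → ℝ) (i : Fin (2*n-6)) :
    shf n (fun j => F j.val * v j) i = (if 0 < i.val then F (i.val - 1) else 0) * shf n v i := by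
  by_cases h : 0 < i.val
  · unfold shf
    simp only [dif_pos h, if_pos h]
  · rw [shf_val_zero (n := n) (v := fun j => F j.val * v j) h,
      shf_val_zero (n := n) (v := v) h, if_neg h]
    ring

lemma Bf_derF (hn : 6 ≤ n) (a d : ℝ) (u v : Fin (2*n-6) → ℝ) :
    Bf n (fun j => ((j:ℝ) * a + d) * u j) v + Bf n u (fun j => ((j:ℝ) * a + d) * v j)
      = ((2*(n:ℝ)-7) * a + 2*d) * Bf n u v := by
  unfold Bf
  rw [← Finset.sum_add_distrib, Finset.mul_sum]
  refine Finset.sum_congr rfl fun i _ => ?_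
  dsimp only
  rw [rev_cast hn i]
  ring

lemma derF_leibniz (hn : 6 ≤ n) (a d : ℝ) (x y : MT n (n-4)) :
    derF n a d (mBrM n (n-4) x y)
      = mBrM n (n-4) (derF n a d x) y + mBrM n (n-4) x (derF n a d y) := by
  apply mext
  · simp [mBr_eq]
  · intro i
    simp only [mBr_eq, cE_derF, cE_mkM, cX_mkM, cE_add, cX_derF, cE_fun_derF]
    rw [shf_coef (fun m => (m:ℝ) * a + d) (cE x) i, shf_coef (fun m => (m:ℝ) * a + d) (cE y) i]
    rcases Nat.eq_zero_or_pos i.val with h | h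
    · rw [if_neg (by omega), shf_val_zero (n := n) (v := cE x) (by omega),
        shf_val_zero (n := n) (v := cE y) (by omega)]
      ring
    · rw [if_pos h, Nat.cast_sub (by omega)]
      push_cast
      ring
  · simp only [mBr_eq, cH_derF, cH_mkM, cH_add, cE_fun_derF]
    rw [Bf_derF hn a d (cE x) (cE y)]

lemma derF_weight (hn : 6 ≤ n) (a d : ℝ) {w : ℤ} {x : MT n (n-4)}
    (hx : (x : Gg n) ∈ gComp n (n-4) w) :
    ((derF n a d x : MT n (n-4)) : Gg n) ∈ gComp n (n-4) w := by
  by_cases hw1 : w = -1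
  · subst hw1
    rw [eq_comb_m1 hn hx, derF_add, derF_smul, derF_smul, derF_eX, derF_eE a d 1 le_rfl]
    refine Submodule.add_mem _ ?_ ?_
    · rw [Submodule.coe_smul, Submodule.coe_smul]
      exact Submodule.smul_mem _ _ (Submodule.smul_mem _ _ (coe_eX ▸ bX_mem hn))
    · rw [Submodule.coe_smul, Submodule.coe_smul]
      refine Submodule.smul_mem _ _ (Submodule.smul_mem _ _ ?_)
      have := bEps_mem hn 1 le_rfl (by omega)
      rw [coe_eE]
      simpa using this
  · by_cases hwH : w = 5 - 2*(n:ℤ)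
    · subst hwH
      rw [eq_smul_eHe hn hx, derF_smul, derF_eHe]
      rw [Submodule.coe_smul, Submodule.coe_smul]
      exact Submodule.smul_mem _ _ (Submodule.smul_mem _ _ (coe_eHe ▸ bEta_mem hn))
    · by_cases hwp : ∃ p : ℕ, 2 ≤ p ∧ p ≤ 2*n-6 ∧ w = -(p:ℤ)
      · obtain ⟨p, hp2, hp3, rfl⟩ := hwp
        rw [eq_smul_eE hn hp2 hp3 hx, derF_smul, derF_eE a d p (by omega)]
        rw [Submodule.coe_smul, Submodule.coe_smul]
        refine Submodule.smul_mem _ _ (Submodule.smul_mem _ _ ?_)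
        rw [coe_eE]
        exact bEps_mem hn p (by omega) hp3
      · push_neg at hwp
        have hx0 : x = 0 := eq_zero_of_mem hn hw1 (fun p h1 h2 h3 => hwp p h1 h2 h3) hwH hx
        rw [hx0, derF_zero]
        exact Submodule.zero_mem _

lemma derF_isDer0 (hn : 6 ≤ n) (a d : ℝ) : IsDer0 n (derF n a d) :=
  ⟨⟨fun x y => derF_add a d x y, fun c x => derF_smul a d c x⟩,
   fun _ _ hx => derF_weight hn a d hx,
   fun x y => by
     rw [derF_leibniz hn a d x y]⟩

/-! ### uYm and uY0 in coordinates -/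

lemma uYm_eq (x : MT n (n-4)) :
    uYm n x = mkM n 0
      (fun i => (((i:ℕ):ℝ)+1) * (2*(n:ℝ) - 7 - ((i:ℕ):ℝ)) *
        (if h : i.val+1 < 2*n-6 then cE x ⟨i.val+1, h⟩ else 0)) 0 := by
  apply mext
  · rfl
  · intro i
    rw [show cE (uYm n x) i = (phi n ![1,0,0,0] ((x:Gg n)).2).1 i from cE_ptoM _ i]
    simp only [phi, cE_mkM, cE]
    norm_num [show (![1,0,0,0] : G2) 2 = 0 from rfl, show (![1,0,0,0] : G2) 3 = 0 from rfl]
    rfl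
  · show 2 * (![1,0,0,0] : G2) 2 * ((x:Gg n)).2.2 = 0
    norm_num [show (![1,0,0,0] : G2) 2 = 0 from rfl, show (![1,0,0,0] : G2) 3 = 0 from rfl]

lemma uYm_eX : uYm n (eX n) = 0 := by
  apply mext
  · simp [uYm_eq]
  · intro i
    simp only [uYm_eq, cE_mkM, cE_eX, cE_zero]
    split <;> ring
  · simp [uYm_eq]

lemma uYm_eE1 : uYm n (eE n 1) = 0 := by
  apply mext
  · simp [uYm_eq]
  · intro i
    simp only [uYm_eq, cE_mkM, cE_eE, cE_zero]
    split
    · rw [if_neg (by omega)]; ring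
    · ring
  · simp [uYm_eq]

lemma uYm_eHe : uYm n (eHe n) = 0 := by
  apply mext
  · simp [uYm_eq]
  · intro i
    simp only [uYm_eq, cE_mkM, cE_eHe, cE_zero]
    split <;> ring
  · simp [uYm_eq]

lemma uYm_eE (p : ℕ) (h2 : 2 ≤ p) (h3 : p ≤ 2*n-6) :
    uYm n (eE n p) = (((p:ℝ)-1) * (2*(n:ℝ)-5-(p:ℝ))) • eE n (p-1) := by
  apply mext
  · simp [uYm_eq]
  · intro i
    simp only [uYm_eq, cE_mkM, cE_smul, cE_eE]
    rcases eq_or_ne (i.val + 2) p with h | h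
    · rw [dif_pos (by omega)]
      rw [if_pos (by omega), if_pos (by omega)]
      have hc : ((i:ℕ):ℝ) + 2 = (p:ℝ) := by exact_mod_cast congrArg (Nat.cast : ℕ → ℝ) h
      rw [show ((i:ℕ):ℝ) = (p:ℝ) - 2 by linarith]
      ring
    · rw [if_neg (by omega)]
      rcases lt_or_ge (i.val+1) (2*n-6) with hlt | hge
      · rw [dif_pos hlt]
        rw [if_neg (by omega)]
        ring
      · rw [dif_neg (by omega)]
        ring
  · simp [uYm_eq]

lemma uYm_add (x y : MT n (n-4)) : uYm n (x + y) = uYm n x + uYm n y := by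
  apply mext
  · simp [uYm_eq]
  · intro i
    simp only [uYm_eq, cE_mkM, cE_add]
    split <;> ring
  · simp [uYm_eq]

lemma uYm_smul (c : ℝ) (x : MT n (n-4)) : uYm n (c • x) = c • uYm n x := by
  apply mext
  · simp [uYm_eq]
  · intro i
    simp only [uYm_eq, cE_mkM, cE_smul]
    split <;> ring
  · simp [uYm_eq]

lemma phi_zero (a : G2) : phi n a (0 : Hs n) = 0 := by
  unfold phi
  refine Prod.ext ?_ (by simp)
  funext i
  simp only [Prod.fst_zero, Pi.zero_apply, Prod.snd_zero]
  split <;> split <;> simp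

lemma uY0_eq (hn : 6 ≤ n) (x y : MT n (n-4)) :
    uY0 n x y = derF n (-2 * cX x) ((2*(n:ℝ)-7) * cX x) y := by
  have hbH2 : (bH n).2 = (0 : Hs n) := rfl
  apply mext
  · show (-(cX x)) * ((gBr n (bH n) (y:Gg n)).1 3) = _
    simp only [gBr, gl2Br, cX_derF]
    show -cX x * (2*((![0,1,0,0] : G2) 1 * cX y - (![0,1,0,0] : G2) 3 * (y:Gg n).1 1)) = _
    norm_num [show (![0,1,0,0] : G2) 2 = 0 from rfl, show (![0,1,0,0] : G2) 3 = 0 from rfl]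
    ring
  · intro i
    have hstep : cE (uY0 n x y) i = (-(cX x)) * ((gBr n (bH n) (y:Gg n)).2.1 i) := by
      rw [show cE (uY0 n x y) i
          = -cX x * cE (ptoM n (n-4) (gBr n (bH n) (y:Gg n))) i from rfl, cE_ptoM]
    rw [hstep]
    simp only [gBr, hbH2, phi_zero, Prod.fst_sub, Prod.fst_add, Pi.sub_apply, Pi.add_apply,
      Prod.fst_zero, Pi.zero_apply, cE_derF]
    show -cX x * ((phi n (![0,1,0,0]) (y:Gg n).2).1 i - 0 + (heisBr n (0:Hs n) (y:Gg n).2).1 i) = _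
    simp only [phi, heisBr]
    norm_num [show (![0,1,0,0] : G2) 2 = 0 from rfl, show (![0,1,0,0] : G2) 3 = 0 from rfl]
    simp only [cE]
    ring
  · show (-(cX x)) * ((gBr n (bH n) (y:Gg n)).2.2) = _
    simp only [gBr, hbH2, phi_zero, Prod.snd_sub, Prod.snd_add, Prod.snd_zero, cH_derF]
    show -cX x * (2 * (![0,1,0,0] : G2) 2 * (y:Gg n).2.2 - 0 + (heisBr n (0:Hs n) (y:Gg n).2).2) = _
    simp only [heisBr]
    norm_num [show (![0,1,0,0] : G2) 2 = 0 from rfl, show (![0,1,0,0] : G2) 3 = 0 from rfl]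
    left
    ring

lemma uY0_isDer0 (hn : 6 ≤ n) (x : MT n (n-4)) : IsDer0 n (uY0 n x) := by
  have : uY0 n x = derF n (-2 * cX x) ((2*(n:ℝ)-7) * cX x) := funext (uY0_eq hn x)
  rw [this]
  exact derF_isDer0 hn _ _


/-! ### classification of degree-0 derivations -/

lemma uYm_zero : uYm n (0 : MT n (n-4)) = 0 := by
  have := uYm_smul (n := n) 0 0
  simpa using this

lemma der0_classify (hn : 6 ≤ n) {D : MT n (n-4) → MT n (n-4)} (hD : IsDer0 n D) :
    ∃ a d : ℝ, D = derF n a d := by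
  obtain ⟨⟨hadd, hsmul⟩, hw, hleib⟩ := hD
  have hD0 : D 0 = 0 := by simpa using hsmul 0 0
  have hDneg : ∀ z, D (-z) = - D z := fun z => by
    rw [← neg_one_smul ℝ z, hsmul]
    exact neg_one_smul ℝ (D z)
  have hXmem : ((eX n : MT n (n-4)) : Gg n) ∈ gComp n (n-4) (-1) := coe_eX ▸ bX_mem hn
  have hE1mem : ((eE n 1 : MT n (n-4)) : Gg n) ∈ gComp n (n-4) (-1) := by
    rw [coe_eE]
    simpa using bEps_mem hn 1 le_rfl (by omega)
  obtain ⟨a, b, hDX⟩ : ∃ a b : ℝ, D (eX n) = a • eX n + b • eE n 1 :=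
    ⟨_, _, eq_comb_m1 hn (hw _ _ hXmem)⟩
  obtain ⟨c, d, hDE1⟩ : ∃ c d : ℝ, D (eE n 1) = c • eX n + d • eE n 1 :=
    ⟨_, _, eq_comb_m1 hn (hw _ _ hE1mem)⟩
  have hEp : ∀ p : ℕ, 2 ≤ p → p ≤ 2*n-6 → ∃ l : ℝ, D (eE n p) = l • eE n p := by
    intro p h2 h3
    refine ⟨_, eq_smul_eE hn h2 h3 ?_⟩
    refine hw _ _ ?_
    rw [coe_eE]
    exact bEps_mem hn p (by omega) h3
  -- c = 0
  have hc0 : c = 0 := by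
    obtain ⟨l2, hl2⟩ := hEp 2 le_rfl (by omega)
    have h0 := hleib (eE n 1) (eE n 2)
    rw [br_eE_eE 1 2 (by omega) (by omega), hD0, hDE1, hl2, br_add_left, br_smul_left,
      br_smul_left, br_smul_right, br_eX_eE 2 (by omega) (by omega),
      br_eE_eE 1 2 (by omega) (by omega)] at h0
    have h1 := congrArg (fun z => cE z ⟨2, by omega⟩) h0.symm
    simpa using h1
  -- the recurrence
  have hrec : ∀ p : ℕ, 1 ≤ p → p ≤ 2*n-6 → D (eE n p) = (((p:ℝ)-1) * a + d) • eE n p := by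
    intro p hp1
    induction p, hp1 using Nat.le_induction with
    | base =>
        intro _
        rw [hDE1, hc0]
        norm_num
    | succ p hp ih =>
        intro hp3
        have hbr := hleib (eX n) (eE n p)
        rw [br_eX_eE p hp (by omega)] at hbr
        rw [hbr, hDX, ih (by omega), br_add_left, br_smul_left, br_smul_left, br_smul_right,
          br_eX_eE p hp (by omega), br_eE_eE 1 p (by omega) hp]
        rw [smul_zero, add_zero, ← add_smul]
        congr 1
        push_cast
        ring
  -- b = 0
  have hb0 : b = 0 := by
    obtain ⟨lN, hlN⟩ := hEp (2*n-6) (by omega) le_rfl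
    have h0 := hleib (eX n) (eE n (2*n-6))
    rw [br_eX_eE_top hn, hD0, hDX, hlN, br_add_left, br_smul_left, br_smul_left,
      br_smul_right, br_eX_eE_top hn, br_eE1_eEtop hn] at h0
    have h1 := congrArg cH h0.symm
    simpa using h1
  -- value on eta
  have hH : D (eHe n) = ((2*(n:ℝ)-7) * a + 2*d) • eHe n := by
    have hbr := hleib (eE n 1) (eE n (2*n-6))
    rw [br_eE1_eEtop hn, hDneg, hDE1, hc0, hrec (2*n-6) (by omega) le_rfl, br_add_left,
      br_smul_left, br_smul_left, br_smul_right, br_eX_eE_top hn,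
      br_eE1_eEtop hn] at hbr
    have h1 : D (eHe n) =
        -((0:ℝ) • (0 : MT n (n-4)) + d • -eHe n + ((↑(2*n-6)-1) * a + d) • -eHe n) := by
      rw [← hbr, neg_neg]
    rw [h1]
    have hc : ((2*n-6 : ℕ) : ℝ) = 2*(n:ℝ) - 6 := by
      rw [Nat.cast_sub (by omega : 6 ≤ 2*n)]
      push_cast
      ring
    rw [hc]
    rw [smul_zero, zero_add, smul_neg, smul_neg, ← neg_add, neg_neg, ← add_smul]
    congr 1
    ring
  refine ⟨a, d, lin_ext hadd hsmul (fun x y => derF_add a d x y) (fun c x => derF_smul a d c x)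
    ?_ ?_ ?_⟩
  · rw [hDX, hb0, derF_eX, zero_smul, add_zero]
  · intro p h1 h3
    rw [hrec p h1 h3, derF_eE a d p h1]
  · rw [hH, derF_eHe]

/-! ### the telescoping identity -/

def Ct (n : ℕ) (u v : Fin (2*n-6) → ℝ) (m : ℕ) : ℝ :=
  if h : 1 ≤ m ∧ m ≤ 2*n-7 ∧ 6 ≤ n then
    (-1:ℝ)^m * (m:ℝ) * (2*(n:ℝ)-6-(m:ℝ)) * u ⟨m, by omega⟩ * v ⟨2*n-6-m, by omega⟩
  else 0

lemma shf_mk_succ (v : Fin (2*n-6) → ℝ) (i : Fin (2*n-6)) (h : i.val+1 < 2*n-6) :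
    shf n v ⟨i.val+1, h⟩ = v i := by
  unfold shf
  rw [dif_pos (Nat.succ_pos i.val)]
  congr 1

lemma Bf_uY (hn : 6 ≤ n) (u v : Fin (2*n-6) → ℝ) :
    Bf n (fun i => (((i:ℕ):ℝ)+1) * (2*(n:ℝ) - 7 - ((i:ℕ):ℝ)) *
        (if h : i.val+1 < 2*n-6 then u ⟨i.val+1, h⟩ else 0)) v
    + Bf n u (fun i => (((i:ℕ):ℝ)+1) * (2*(n:ℝ) - 7 - ((i:ℕ):ℝ)) *
        (if h : i.val+1 < 2*n-6 then v ⟨i.val+1, h⟩ else 0)) = 0 := by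
  have key : ∀ i : Fin (2*n-6),
      ((-1:ℝ)^(i.val+1) * ((((i:ℕ):ℝ)+1) * (2*(n:ℝ) - 7 - ((i:ℕ):ℝ)) *
          (if h : i.val+1 < 2*n-6 then u ⟨i.val+1, h⟩ else 0)) * v i.rev)
      + ((-1:ℝ)^(i.val+1) * u i * ((((i.rev:ℕ):ℝ)+1) * (2*(n:ℝ) - 7 - ((i.rev:ℕ):ℝ)) *
          (if h : i.rev.val+1 < 2*n-6 then v ⟨i.rev.val+1, h⟩ else 0)))
      = Ct n u v (i.val+1) - Ct n u v i.val := by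
    intro i
    have hrev : (i.rev : ℕ) = 2*n-6-(i.val+1) := Fin.val_rev i
    have hlt := i.isLt
    have hterm2 : ((-1:ℝ)^(i.val+1) * u i * ((((i.rev:ℕ):ℝ)+1) * (2*(n:ℝ) - 7 - ((i.rev:ℕ):ℝ)) *
          (if h : i.rev.val+1 < 2*n-6 then v ⟨i.rev.val+1, h⟩ else 0)))
        = - Ct n u v i.val := by
      rcases Nat.eq_zero_or_pos i.val with h0 | h0
      · rw [dif_neg (by omega), Ct, dif_neg (by omega)]
        ring
      · rw [dif_pos (show i.rev.val + 1 < 2*n-6 by omega), Ct, dif_pos (by omega)]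
        have e1 : (⟨i.rev.val + 1, by omega⟩ : Fin (2*n-6)) = ⟨2*n-6-i.val, by omega⟩ :=
          Fin.ext (show i.rev.val + 1 = 2*n-6-i.val by omega)
        have e2 : (⟨i.val, by omega⟩ : Fin (2*n-6)) = i := Fin.ext rfl
        rw [e1, e2]
        have c1 : ((i.rev : ℕ) : ℝ) = 2*(n:ℝ) - 7 - (i.val : ℝ) := rev_cast hn i
        rw [c1]
        have c2 : (-1:ℝ)^(i.val+1) = -(-1:ℝ)^(i.val) := by
          rw [pow_succ]; ring
        rw [c2]
        ring
    have hterm1 : ((-1:ℝ)^(i.val+1) * ((((i:ℕ):ℝ)+1) * (2*(n:ℝ) - 7 - ((i:ℕ):ℝ)) *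
          (if h : i.val+1 < 2*n-6 then u ⟨i.val+1, h⟩ else 0)) * v i.rev)
        = Ct n u v (i.val+1) := by
      rcases lt_or_ge (i.val+1) (2*n-6) with h1 | h1
      · rw [dif_pos h1, Ct, dif_pos (by omega)]
        have e1 : (⟨2*n-6-(i.val+1), by omega⟩ : Fin (2*n-6)) = i.rev :=
          Fin.ext (show 2*n-6-(i.val+1) = i.rev.val by omega)
        rw [e1]
        have c3 : ((i.val+1 : ℕ) : ℝ) = ((i:ℕ):ℝ) + 1 := by push_cast; ring
        rw [c3]
        ring
      · rw [dif_neg (by omega), Ct, dif_neg (by omega)]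
        ring
    rw [hterm1, hterm2]
    ring
  unfold Bf
  rw [← Finset.sum_add_distrib]
  rw [Finset.sum_congr rfl fun i _ => key i]
  rw [show ∑ i : Fin (2*n-6), (Ct n u v (i.val+1) - Ct n u v i.val)
      = ∑ m ∈ Finset.range (2*n-6), (Ct n u v (m+1) - Ct n u v m) from
    Fin.sum_univ_eq_sum_range (fun m => Ct n u v (m+1) - Ct n u v m) (2*n-6)]
  rw [Finset.sum_range_sub (fun m => Ct n u v m)]
  rw [Ct, dif_neg (by omega), Ct, dif_neg (by omega)]
  ring

lemma cE_fun_uYm (x : MT n (n-4)) :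
    cE (uYm n x) = fun i : Fin (2*n-6) => (((i:ℕ):ℝ)+1) * (2*(n:ℝ) - 7 - ((i:ℕ):ℝ)) *
      (if h : i.val+1 < 2*n-6 then cE x ⟨i.val+1, h⟩ else 0) :=
  funext fun i => by rw [uYm_eq]; rfl

lemma cX_br (x y : MT n (n-4)) : cX (mBrM n (n-4) x y) = 0 := by
  rw [mBr_eq]; rfl

lemma cE_br (x y : MT n (n-4)) (i) :
    cE (mBrM n (n-4) x y) i = cX x * shf n (cE y) i - cX y * shf n (cE x) i := by
  rw [mBr_eq]; rfl

lemma cH_br (x y : MT n (n-4)) : cH (mBrM n (n-4) x y) = Bf n (cE x) (cE y) := by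
  rw [mBr_eq]; rfl

lemma cX_uYm (x : MT n (n-4)) : cX (uYm n x) = 0 := by
  rw [uYm_eq]; rfl

lemma cH_uYm (x : MT n (n-4)) : cH (uYm n x) = 0 := by
  rw [uYm_eq]; rfl

lemma cE_uYm (x : MT n (n-4)) (i : Fin (2*n-6)) :
    cE (uYm n x) i = (((i:ℕ):ℝ)+1) * (2*(n:ℝ) - 7 - ((i:ℕ):ℝ)) *
      (if h : i.val+1 < 2*n-6 then cE x ⟨i.val+1, h⟩ else 0) := by
  rw [uYm_eq]; rfl

lemma shf_pos (w : Fin (2*n-6) → ℝ) (i : Fin (2*n-6)) (h : 0 < i.val) :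
    shf n w i = w ⟨i.val - 1, by omega⟩ := by
  unfold shf
  rw [dif_pos h]

lemma shf_uYm (hn : 6 ≤ n) (x : MT n (n-4)) {i : Fin (2*n-6)} (h : 0 < i.val) :
    shf n (cE (uYm n x)) i = ((i.val:ℝ)) * (2*(n:ℝ) - 6 - (i.val:ℝ)) * cE x i := by
  have hlt := i.isLt
  rw [shf_pos _ _ h, cE_uYm]
  rw [show ((⟨i.val - 1, by omega⟩ : Fin (2*n-6)) : ℕ) = i.val - 1 from rfl]
  rw [dif_pos (show i.val - 1 + 1 < 2*n-6 by omega)]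
  have e1 : (⟨i.val - 1 + 1, show i.val - 1 + 1 < 2*n-6 by omega⟩ : Fin (2*n-6)) = i :=
    Fin.ext (show i.val - 1 + 1 = i.val by omega)
  rw [e1]
  have c1 : ((i.val - 1 : ℕ) : ℝ) = (i.val : ℝ) - 1 := by
    rw [Nat.cast_sub (by omega)]
    push_cast
    ring
  rw [c1]
  ring

/-! ### Part 1: u_Y lies in the first prolongation -/

lemma uY_main_identity (hn : 6 ≤ n) (x y : MT n (n-4)) :
    uYm n (mBrM n (n-4) x y) =
      mBrM n (n-4) (uYm n x) y + uY0 n x y + mBrM n (n-4) x (uYm n y) - uY0 n y x := by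
  apply mext
  · simp only [cX_add, cX_sub, cX_br, cX_uYm, uY0_eq hn, cX_derF]
    ring
  · intro i
    have hlt := i.isLt
    rw [cE_uYm (mBrM n (n-4) x y) i]
    simp only [cE_add, cE_sub, cE_br, uY0_eq hn, cE_derF, cX_uYm, shf_mk_succ]
    rcases lt_or_ge (i.val+1) (2*n-6) with h1 | h1
    · rw [dif_pos h1]
      rcases Nat.eq_zero_or_pos i.val with h0 | h0
      · rw [shf_val_zero (n := n) (v := cE (uYm n x)) (by omega),
          shf_val_zero (n := n) (v := cE (uYm n y)) (by omega),
          shf_val_zero (n := n) (v := cE x) (by omega),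
          shf_val_zero (n := n) (v := cE y) (by omega)]
        rw [show ((i.val : ℕ) : ℝ) = 0 from by rw [h0]; norm_num]
        ring
      · rw [shf_uYm hn x h0, shf_uYm hn y h0]
        ring
    · rw [dif_neg (by omega)]
      have hival : i.val = 2*n-7 := by omega
      have h0 : 0 < i.val := by omega
      rw [shf_uYm hn x h0, shf_uYm hn y h0]
      rw [show ((i.val : ℕ) : ℝ) = 2*(n:ℝ) - 7 from by
        rw [hival, Nat.cast_sub (by omega : 7 ≤ 2*n)]; push_cast; ring]
      ring
  · simp only [cH_add, cH_sub, cH_br, cH_uYm, uY0_eq hn, cH_derF, cE_fun_uYm]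
    have hB := Bf_uY hn (cE x) (cE y)
    linear_combination -hB

lemma isG1_uY (hn : 6 ≤ n) : IsG1 n (uYm n, uY0 n) := by
  refine ⟨⟨fun x y => uYm_add x y, fun c x => uYm_smul c x⟩, ?_, ?_, ?_, ?_, ?_, ?_, ?_⟩
  · intro x x'
    funext y
    show (-(cX (x + x'))) • ptoM n (n-4) (gBr n (bH n) (y:Gg n)) = _
    rw [cX_add, neg_add, add_smul]
    rfl
  · intro c x
    funext y
    show (-(cX (c • x))) • ptoM n (n-4) (gBr n (bH n) (y:Gg n)) = _
    rw [cX_smul, show -(c * cX x) = c * (-(cX x)) from by ring, ← smul_smul]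
    rfl
  · exact fun x => uY0_isDer0 hn x
  · intro x hx
    show uYm n x = 0
    rw [eq_comb_m1 hn hx, uYm_add, uYm_smul, uYm_smul, uYm_eX, uYm_eE1]
    simp
  · intro j hj x hx
    dsimp only
    constructor
    · by_cases hwH : j = 5 - 2*(n:ℤ)
      · subst hwH
        rw [eq_smul_eHe hn hx, uYm_smul, uYm_eHe, smul_zero]
        exact Submodule.zero_mem _
      · by_cases hwp : ∃ p : ℕ, 2 ≤ p ∧ p ≤ 2*n-6 ∧ j = -(p:ℤ)
        · obtain ⟨p, hp2, hp3, rfl⟩ := hwp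
          rw [eq_smul_eE hn hp2 hp3 hx, uYm_smul, uYm_eE p hp2 hp3]
          rw [Submodule.coe_smul, Submodule.coe_smul, coe_eE]
          refine Submodule.smul_mem _ _ (Submodule.smul_mem _ _ ?_)
          have := bEps_mem hn (p-1) (by omega) (by omega)
          rw [show (-(p:ℤ) + 1) = -((p-1 : ℕ) : ℤ) from by omega]
          exact this
        · push_neg at hwp
          rw [eq_zero_of_mem hn (by omega) (fun p h1 h2 => hwp p h1 h2) hwH hx, uYm_zero]
          exact Submodule.zero_mem _
    · funext y
      show (-(cX x)) • ptoM n (n-4) (gBr n (bH n) (y:Gg n)) = 0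
      rw [show cX x = 0 from gComp_vanish_X hn hx (by omega), neg_zero, zero_smul]
  · exact fun x y => uY_main_identity hn x y
  · intro x y
    funext z
    show (-(cX (mBrM n (n-4) x y))) • ptoM n (n-4) (gBr n (bH n) (z:Gg n)) = 0
    rw [show cX (mBrM n (n-4) x y) = 0 from by rw [mBr_eq]; rfl, neg_zero, zero_smul]


/-! ### membership of basis vectors -/

lemma eX_mem (hn : 6 ≤ n) : ((eX n : MT n (n-4)) : Gg n) ∈ gComp n (n-4) (-1) :=
  coe_eX ▸ bX_mem hn

lemma eE1_mem (hn : 6 ≤ n) : ((eE n 1 : MT n (n-4)) : Gg n) ∈ gComp n (n-4) (-1) := by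
  rw [coe_eE]
  simpa using bEps_mem hn 1 le_rfl (by omega)

lemma eEp_mem (hn : 6 ≤ n) (p : ℕ) (h1 : 1 ≤ p) (h2 : p ≤ 2*n-6) :
    ((eE n p : MT n (n-4)) : Gg n) ∈ gComp n (n-4) (-(p:ℤ)) := by
  rw [coe_eE]
  exact bEps_mem hn p h1 h2

lemma eHe_mem (hn : 6 ≤ n) : ((eHe n : MT n (n-4)) : Gg n) ∈ gComp n (n-4) (5 - 2*(n:ℤ)) :=
  coe_eHe ▸ bEta_mem hn

/-! ### more bracket values and derF facts -/

lemma br_eE1_eX : mBrM n (n-4) (eE n 1) (eX n) = -(eE n 2) := by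
  apply mext
  · simp [mBr_eq]
  · intro i
    simp only [mBr_eq, cE_mkM, cX_eE, cX_eX, cE_neg, cE_eE]
    rw [show cE (eX n) = fun _ => (0:ℝ) from rfl, shf_zero]
    rcases Nat.eq_zero_or_pos i.val with h0 | h0
    · rw [shf_val_zero (n := n) (v := cE (eE n 1)) (by omega), if_neg (by omega)]
      ring
    · rw [shf_pos _ _ h0]
      simp only [cE_eE]
      rcases eq_or_ne (i.val) 1 with h1 | h1
      · rw [if_pos (by omega), if_pos (by omega)]
        ring
      · rw [if_neg (by omega), if_neg (by omega)]
        ring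
  · simp only [mBr_eq, cH_mkM, cH_neg, cH_eE]
    rw [show cE (eX n) = fun _ => (0:ℝ) from rfl, Bf_zero_right]
    ring

lemma derF00 (y : MT n (n-4)) : derF n 0 0 y = 0 := by
  apply mext <;> intros <;> simp

lemma derF_param_smul (c A B : ℝ) (y : MT n (n-4)) :
    c • derF n A B y = derF n (c*A) (c*B) y := by
  apply mext
  · simp; ring
  · intro i; simp; ring
  · simp; ring

/-! ### Part 2: u_Y is nonzero -/

lemma uY_ne_zero (hn : 6 ≤ n) :
    (uYm n, uY0 n) ≠ (0 : (MT n (n-4) → MT n (n-4)) × (MT n (n-4) → MT n (n-4) → MT n (n-4))) := by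
  intro h
  have h2 : uY0 n = 0 := congrArg Prod.snd h
  have h3 := congrFun (congrFun h2 (eX n)) (eE n 1)
  rw [uY0_eq hn, derF_eE _ _ 1 le_rfl] at h3
  simp only [Pi.zero_apply] at h3
  have hc : (6:ℝ) ≤ (n:ℝ) := by exact_mod_cast hn
  rcases smul_eq_zero.mp h3 with h4 | h4
  · rw [cX_eX] at h4
    norm_num at h4
    linarith
  · have h5 := congrArg (fun z => cE z ⟨0, by omega⟩) h4
    simp only [cE_eE, cE_zero] at h5
    norm_num at h5

/-! ### Part 3: classification of g₁ -/

set_option maxHeartbeats 2000000 in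
lemma g1_span (hn : 6 ≤ n) (p : (MT n (n-4) → MT n (n-4)) × (MT n (n-4) → MT n (n-4) → MT n (n-4)))
    (hp : IsG1 n p) : ∃ c : ℝ, p = c • (uYm n, uY0 n) := by
  obtain ⟨⟨hadd1, hsmul1⟩, hadd2, hsmul2, hder, hm1, hj2, hmain, hbr0⟩ := hp
  have hp10 : p.1 0 = 0 := by simpa using hsmul1 0 0
  have h1X : p.1 (eX n) = 0 := hm1 _ (eX_mem hn)
  have h1E1 : p.1 (eE n 1) = 0 := hm1 _ (eE1_mem hn)
  have h2Ep : ∀ q : ℕ, 2 ≤ q → q ≤ 2*n-6 → p.2 (eE n q) = 0 := fun q h2 h3 =>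
    (hj2 (-(q:ℤ)) (by omega) _ (eEp_mem hn q (by omega) h3)).2
  have h2H : p.2 (eHe n) = 0 := (hj2 (5-2*(n:ℤ)) (by omega) _ (eHe_mem hn)).2
  obtain ⟨a, d, hP2X⟩ := der0_classify hn (hder (eX n))
  obtain ⟨a', d', hP2E1⟩ := der0_classify hn (hder (eE n 1))
  -- p.1 (eE 2) decomposition
  obtain ⟨α, β, h1E2⟩ : ∃ α β : ℝ, p.1 (eE n 2) = α • eX n + β • eE n 1 := by
    have hmem := (hj2 (-((2:ℕ):ℤ)) (by norm_num) _ (eEp_mem hn 2 (by omega) (by omega))).1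
    rw [show (-((2:ℕ):ℤ) + 1) = -1 by norm_num] at hmem
    exact ⟨_, _, eq_comb_m1 hn hmem⟩
  -- p.1 (eE q) for q ≥ 3
  have h1Ep : ∀ q : ℕ, 3 ≤ q → q ≤ 2*n-6 →
      ∃ cq : ℝ, p.1 (eE n q) = cq • eE n (q-1) := by
    intro q h3 h4
    have hmem := (hj2 (-(q:ℤ)) (by omega) _ (eEp_mem hn q (by omega) h4)).1
    rw [show (-(q:ℤ) + 1) = -(((q-1:ℕ)):ℤ) by omega] at hmem
    exact ⟨_, eq_smul_eE hn (by omega) (by omega) hmem⟩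
  -- p.1 eta
  obtain ⟨e, h1H⟩ : ∃ e : ℝ, p.1 (eHe n) = e • eE n (2*n-6) := by
    have hmem := (hj2 (5-2*(n:ℤ)) (by omega) _ (eHe_mem hn)).1
    rw [show (5-2*(n:ℤ) + 1) = -(((2*n-6-1:ℕ)+1:ℕ):ℤ) by omega] at hmem
    rw [show ((2*n-6-1:ℕ)+1 : ℕ) = 2*n-6 by omega] at hmem
    exact ⟨_, eq_smul_eE hn (by omega) (by omega) hmem⟩
  -- a' = d' = 0
  have ha'd' : a' = 0 ∧ d' = 0 := by
    obtain ⟨c3, h1E3⟩ := h1Ep 3 le_rfl (by omega)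
    obtain ⟨c4, h1E4⟩ := h1Ep 4 (by omega) (by omega)
    have e3 := hmain (eE n 1) (eE n 3)
    rw [br_eE_eE 1 3 (by omega) (by omega), hp10, h1E1, br_zero_left, hP2E1,
      derF_eE _ _ 3 (by omega), h1E3, br_smul_right,
      br_eE_eE 1 2 (by omega) (by omega), h2Ep 3 (by omega) (by omega)] at e3
    have e3' := congrArg (fun z => cE z ⟨2, by omega⟩) e3
    simp only [cE_add, cE_sub, cE_smul, cE_zero, cE_eE, Pi.zero_apply, smul_zero] at e3'
    norm_num at e3'
    have e4 := hmain (eE n 1) (eE n 4)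
    rw [br_eE_eE 1 4 (by omega) (by omega), hp10, h1E1, br_zero_left, hP2E1,
      derF_eE _ _ 4 (by omega), h1E4, br_smul_right,
      br_eE_eE 1 3 (by omega) (by omega), h2Ep 4 (by omega) (by omega)] at e4
    have e4' := congrArg (fun z => cE z ⟨3, by omega⟩) e4
    simp only [cE_add, cE_sub, cE_smul, cE_zero, cE_eE, Pi.zero_apply, smul_zero] at e4'
    norm_num at e4'
    constructor <;> linarith
  -- alpha = 0
  have hα : α = 0 := by
    have e2 := hmain (eE n 1) (eE n 2)
    rw [br_eE_eE 1 2 (by omega) (by omega), hp10, h1E1, br_zero_left, hP2E1,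
      derF_eE _ _ 2 (by omega), h1E2, br_add_right, br_smul_right, br_smul_right,
      br_eE1_eX, br_eE_eE 1 1 (by omega) (by omega), h2Ep 2 (by omega) (by omega)] at e2
    have e2' := congrArg (fun z => cE z ⟨1, by omega⟩) e2
    simp only [cE_add, cE_sub, cE_smul, cE_zero, cE_eE, cE_neg, Pi.zero_apply, smul_zero] at e2'
    norm_num [ha'd'.1, ha'd'.2] at e2'
    exact e2'
  -- the relation (2n-7) a + 2 d = 0
  have hrel : (2*(n:ℝ)-7) * a + 2*d = 0 := by
    have eH := hmain (eX n) (eHe n)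
    rw [br_x_eHe, hp10, h1X, br_zero_left, hP2X, derF_eHe, h1H, br_smul_right,
      br_eX_eE_top hn, h2H] at eH
    have eH' := congrArg cH eH
    simp only [cH_add, cH_sub, cH_smul, cH_zero, cH_eHe, Pi.zero_apply, smul_zero] at eH'
    ring_nf at eH' ⊢
    linarith [eH']
  -- e = 0
  have he0 : e = 0 := by
    obtain ⟨cN, h1EN⟩ := h1Ep (2*n-6) (by omega) le_rfl
    have eV := hmain (eE n 1) (eE n (2*n-6))
    rw [br_eE1_eEtop hn, hP2E1, ha'd'.1, ha'd'.2, h1E1, br_zero_left, h1EN, br_smul_right,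
      br_eE_eE 1 (2*n-6-1) (by omega) (by omega), h2Ep (2*n-6) (by omega) le_rfl] at eV
    have hneg : p.1 (-eHe n) = - p.1 (eHe n) := by
      rw [← neg_one_smul ℝ (eHe n), hsmul1]
      exact neg_one_smul ℝ (p.1 (eHe n))
    rw [hneg, h1H] at eV
    have eV' := congrArg (fun z => cE z ⟨2*n-7, by omega⟩) eV
    simp only [cE_add, cE_sub, cE_smul, cE_neg, cE_zero, cE_eE, Pi.zero_apply, smul_zero,
      derF00] at eV'
    rw [if_pos (by omega)] at eV'
    ring_nf at eV'
    linarith [eV']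
  set c : ℝ := -a/2 with hc
  have ha : a = -2 * c := by rw [hc]; ring
  have hd : d = (2*(n:ℝ)-7) * c := by rw [hc]; linear_combination ((1:ℝ)/2) * hrel
  -- base value p.1 (eE 2)
  have hbase : p.1 (eE n 2) = d • eE n 1 := by
    have e1 := hmain (eX n) (eE n 1)
    rw [br_eX_eE 1 (by omega) (by omega), h1X, br_zero_left, h1E1, br_zero_right,
      hP2X, derF_eE _ _ 1 le_rfl, hP2E1, ha'd'.1, ha'd'.2, derF00] at e1
    rw [e1]
    norm_num
  -- the key induction
  have key : ∀ q : ℕ, 2 ≤ q → q ≤ 2*n-6 →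
      p.1 (eE n q) = (c * ((q:ℝ)-1) * (2*(n:ℝ)-5-(q:ℝ))) • eE n (q-1) := by
    intro q hq2
    induction q, hq2 using Nat.le_induction with
    | base =>
        intro _
        rw [hbase, hd, show (2-1 : ℕ) = 1 from rfl]
        congr 1
        push_cast
        ring
    | succ q hq ih =>
        intro hq3
        have eq1 := hmain (eX n) (eE n q)
        rw [br_eX_eE q (by omega) (by omega), h1X, br_zero_left, hP2X,
          derF_eE _ _ q (by omega), ih (by omega), br_smul_right,
          br_eX_eE (q-1) (by omega) (by omega), h2Ep q (by omega) (by omega)] at eq1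
        rw [show q - 1 + 1 = q by omega] at eq1
        rw [eq1, show (q+1-1 : ℕ) = q by omega]
        simp only [zero_add, Pi.zero_apply, sub_zero]
        rw [← add_smul]
        congr 1
        rw [ha, hd]
        push_cast
        ring
  -- final assembly
  have hUadd := (isG1_uY hn).2.1
  have hUsmul := (isG1_uY hn).2.2.1
  refine ⟨c, Prod.ext ?_ ?_⟩
  · show p.1 = c • uYm n
    refine lin_ext hadd1 hsmul1 (fun x y => ?_) (fun r x => ?_) ?_ ?_ ?_
    · show c • uYm n (x + y) = c • uYm n x + c • uYm n y
      rw [uYm_add, smul_add]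
    · show c • uYm n (r • x) = r • (c • uYm n x)
      rw [uYm_smul, smul_comm]
    · show p.1 (eX n) = c • uYm n (eX n)
      rw [h1X, uYm_eX, smul_zero]
    · intro q h1q h3q
      show p.1 (eE n q) = c • uYm n (eE n q)
      by_cases hq1 : q = 1
      · subst hq1
        rw [h1E1, uYm_eE1, smul_zero]
      · have hq2 : 2 ≤ q := by omega
        rw [key q hq2 h3q, uYm_eE q hq2 h3q, smul_smul]
        congr 1
        ring
    · show p.1 (eHe n) = c • uYm n (eHe n)
      rw [h1H, he0, zero_smul, uYm_eHe, smul_zero]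
  · show p.2 = c • uY0 n
    have hval : ∀ x y, (c • uY0 n) x y = c • uY0 n x y := fun x y => rfl
    refine lin_ext hadd2 hsmul2 (fun x x' => ?_) (fun r x => ?_) ?_ ?_ ?_
    · show c • uY0 n (x + x') = c • uY0 n x + c • uY0 n x'
      rw [show uY0 n (x + x') = uY0 n x + uY0 n x' from hUadd x x', smul_add]
    · show c • uY0 n (r • x) = r • (c • uY0 n x)
      rw [show uY0 n (r • x) = r • uY0 n x from hUsmul r x, smul_comm]
    · show p.2 (eX n) = c • uY0 n (eX n)
      rw [hP2X]
      funext y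
      show derF n a d y = c • uY0 n (eX n) y
      rw [uY0_eq hn]
      simp only [cX_eX, mul_one]
      rw [derF_param_smul]
      rw [show a = c * (-2) from by rw [ha]; ring,
        show d = c * (2*(n:ℝ)-7) from by rw [hd]; ring]
    · intro q h1q h3q
      show p.2 (eE n q) = c • uY0 n (eE n q)
      have hz : ∀ y, uY0 n (eE n q) y = 0 := fun y => by
        show (-(cX (eE n q))) • ptoM n (n-4) (gBr n (bH n) (y:Gg n)) = 0
        rw [cX_eE, neg_zero, zero_smul]
      by_cases hq1 : q = 1
      · subst hq1
        rw [hP2E1, ha'd'.1, ha'd'.2]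
        funext y
        show derF n 0 0 y = c • uY0 n (eE n 1) y
        rw [derF00, hz y, smul_zero]
      · rw [h2Ep q (by omega) h3q]
        funext y
        show (0 : MT n (n-4)) = c • uY0 n (eE n q) y
        rw [hz y, smul_zero]
    · show p.2 (eHe n) = c • uY0 n (eHe n)
      rw [h2H]
      funext y
      show (0 : MT n (n-4)) = c • uY0 n (eHe n) y
      have hz : uY0 n (eHe n) y = 0 := by
        show (-(cX (eHe n))) • ptoM n (n-4) (gBr n (bH n) (y:Gg n)) = 0
        rw [cX_eHe, neg_zero, zero_smul]
      rw [hz, smul_zero]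

/-! ### Part 4: the second prolongation vanishes -/

lemma uY0_zeroX (x y : MT n (n-4)) (h : cX x = 0) : uY0 n x y = 0 := by
  show (-(cX x)) • ptoM n (n-4) (gBr n (bH n) (y:Gg n)) = 0
  rw [h, neg_zero, zero_smul]

lemma uY0_eX_apply (hn : 6 ≤ n) (y : MT n (n-4)) :
    uY0 n (eX n) y = derF n (-2) (2*(n:ℝ)-7) y := by
  rw [uY0_eq hn, cX_eX, mul_one, mul_one]

def gq (n : ℕ) (q : ℕ) : ℝ :=
  (2*(n:ℝ)-7) + ∑ i ∈ Finset.Ico 3 q, ((i:ℝ)-1)*(2*(n:ℝ)-5-(i:ℝ))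

lemma gq_succ (q : ℕ) (h : 3 ≤ q) :
    gq n (q+1) = gq n q + ((q:ℝ)-1)*(2*(n:ℝ)-5-(q:ℝ)) := by
  unfold gq
  rw [Finset.sum_Ico_succ_top h]
  ring

lemma gq_pos (hn : 6 ≤ n) (q : ℕ) (hq : q ≤ 2*n-6) : 0 < gq n q := by
  unfold gq
  have hn' : (6:ℝ) ≤ (n:ℝ) := by exact_mod_cast hn
  have h2 : 0 ≤ ∑ i ∈ Finset.Ico 3 q, ((i:ℝ)-1)*(2*(n:ℝ)-5-(i:ℝ)) := by
    refine Finset.sum_nonneg fun i hi => ?_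
    rw [Finset.mem_Ico] at hi
    have hi3 : (3:ℝ) ≤ (i:ℝ) := by exact_mod_cast hi.1
    have hiu : (i:ℝ) ≤ 2*(n:ℝ)-7 := by
      have h7 : i ≤ 2*n-7 := by omega
      have := (Nat.cast_le (α := ℝ)).mpr h7
      calc (i:ℝ) ≤ ((2*n-7:ℕ):ℝ) := this
      _ = 2*(n:ℝ)-7 := by rw [Nat.cast_sub (by omega)]; push_cast; ring
    nlinarith
  linarith

set_option maxHeartbeats 2000000 in
lemma g2_zero (hn : 6 ≤ n)
    (t : (MT n (n-4) → MT n (n-4)) × (MT n (n-4) → MT n (n-4) → MT n (n-4)) ×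
         (MT n (n-4) → (MT n (n-4) → MT n (n-4)) × (MT n (n-4) → MT n (n-4) → MT n (n-4))))
    (ht : IsG2 n t) : t = 0 := by
  obtain ⟨⟨tadd1, tsmul1⟩, tadd21, tsmul21, tadd22, tsmul22, tder, tg1, tm1, tm2, tj3,
    tmain, tmid, tzero⟩ := ht
  have ht10 : t.1 0 = 0 := by simpa using tsmul1 0 0
  have h8X := tm1 _ (eX_mem hn)
  have h8E1 := tm1 _ (eE1_mem hn)
  have hmem2 : ((eE n 2 : MT n (n-4)) : Gg n) ∈ gComp n (n-4) (-2) := by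
    have := eEp_mem hn 2 (by omega) (by omega)
    rwa [show (-((2:ℕ):ℤ)) = -2 by norm_num] at this
  have h9 := tm2 _ hmem2
  have h10E : ∀ q : ℕ, 3 ≤ q → q ≤ 2*n-6 → t.2.1 (eE n q) = 0 ∧ t.2.2 (eE n q) = 0 :=
    fun q h3 h4 => ⟨(tj3 (-(q:ℤ)) (by omega) _ (eEp_mem hn q (by omega) h4)).2.1,
      (tj3 (-(q:ℤ)) (by omega) _ (eEp_mem hn q (by omega) h4)).2.2⟩
  have h10H := tj3 (5-2*(n:ℤ)) (by omega) _ (eHe_mem hn)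
  obtain ⟨γX, hX22⟩ := g1_span hn _ (tg1 (eX n))
  obtain ⟨γ1, hE122⟩ := g1_span hn _ (tg1 (eE n 1))
  -- t.2.1 (eE 2)
  have hA : t.2.1 (eE n 2) = fun z => γX • uY0 n (eE n 1) z - γ1 • uY0 n (eX n) z := by
    have h12 := tmid (eX n) (eE n 1)
    rw [br_eX_eE 1 (by omega) (by omega)] at h12
    rw [h12, hX22, hE122]
    rfl
  -- γ1 = 0
  have hγ1 : γ1 = 0 := by
    have hid := tmain (eE n 1) (eE n 2)
    rw [br_eE_eE 1 2 (by omega) (by omega), ht10, h8E1.1, br_zero_left, h9.1,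
      br_zero_right, h8E1.2, hA, hE122, h9.2] at hid
    have e2 : (fun z => γX • uY0 n (eE n 1) z - γ1 • uY0 n (eX n) z) (eE n 1)
        = (- γ1 * (2*(n:ℝ)-7)) • eE n 1 := by
      show γX • uY0 n (eE n 1) (eE n 1) - γ1 • uY0 n (eX n) (eE n 1) = _
      rw [uY0_zeroX _ _ (cX_eE 1), uY0_eX_apply hn, derF_eE _ _ 1 le_rfl, smul_zero,
        smul_smul]
      push_cast
      rw [zero_sub, ← neg_smul]
      congr 1
      ring
    rw [e2] at hid
    have e1 : ((γ1 • (uYm n, uY0 n)).1) (eE n 2) = (γ1 * (2*(n:ℝ)-7)) • eE n 1 := by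
      show γ1 • uYm n (eE n 2) = _
      rw [uYm_eE 2 (by omega) (by omega), smul_smul, show (2-1 : ℕ) = 1 from rfl]
      congr 1
      push_cast
      ring
    rw [e1] at hid
    have hid' := congrArg (fun z => cE z ⟨0, by omega⟩) hid
    simp only [cE_add, cE_sub, cE_smul, cE_zero, cE_eE, Pi.zero_apply, Prod.fst_zero,
      if_true] at hid'
    have hn' : (6:ℝ) ≤ (n:ℝ) := by exact_mod_cast hn
    have h2 : γ1 * (2*(n:ℝ)-7) = 0 := by linear_combination (-(1:ℝ)/2) * hid'
    rcases mul_eq_zero.mp h2 with h | h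
    · exact h
    · linarith
  -- the induction for t.1 (eE q)
  have hAz : t.2.1 (eE n 2) = 0 := by
    rw [hA]
    funext z
    rw [uY0_zeroX _ _ (cX_eE 1), hγ1, zero_smul, smul_zero, sub_zero]
    rfl
  have hE122z : t.2.2 (eE n 1) = 0 := by rw [hE122, hγ1, zero_smul]
  have key : ∀ q : ℕ, 3 ≤ q → q ≤ 2*n-6 →
      t.1 (eE n q) = (γX * gq n q) • eE n (q-2) := by
    intro q hq3
    induction q, hq3 using Nat.le_induction with
    | base =>
        intro _
        have hid := tmain (eX n) (eE n 2)
        rw [br_eX_eE 2 (by omega) (by omega), h8X.1, br_zero_left, h8X.2, h9.1,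
          br_zero_right, hAz, hX22, h9.2] at hid
        rw [hid]
        have e1 : ((γX • (uYm n, uY0 n)).1) (eE n 2) = (γX * (2*(n:ℝ)-7)) • eE n 1 := by
          show γX • uYm n (eE n 2) = _
          rw [uYm_eE 2 (by omega) (by omega), smul_smul, show (2-1 : ℕ) = 1 from rfl]
          congr 1
          push_cast
          ring
        rw [e1]
        have hgq3 : gq n 3 = 2*(n:ℝ)-7 := by
          unfold gq
          rw [show Finset.Ico 3 3 = ∅ from Finset.Ico_self 3, Finset.sum_empty]
          ring
        rw [show (3-2 : ℕ) = 1 from rfl, hgq3]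
        simp only [Pi.zero_apply, Prod.fst_zero, zero_add, add_zero, sub_zero]
    | succ q hq ih =>
        intro hq4
        have hid := tmain (eX n) (eE n q)
        rw [br_eX_eE q (by omega) (by omega), h8X.1, br_zero_left, h8X.2,
          ih (by omega), br_smul_right, br_eX_eE (q-2) (by omega) (by omega),
          (h10E q (by omega) (by omega)).1, (h10E q (by omega) (by omega)).2, hX22] at hid
        rw [show q - 2 + 1 = q - 1 by omega] at hid
        rw [hid]
        have e1 : ((γX • (uYm n, uY0 n)).1) (eE n q) =
            (γX * (((q:ℝ)-1) * (2*(n:ℝ)-5-(q:ℝ)))) • eE n (q-1) := by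
          show γX • uYm n (eE n q) = _
          rw [uYm_eE q (by omega) (by omega), smul_smul]
        rw [e1]
        simp only [Pi.zero_apply, Prod.fst_zero, zero_add, add_zero, sub_zero]
        rw [← add_smul]
        rw [show (q+1-2 : ℕ) = q - 1 by omega]
        congr 1
        rw [gq_succ q (by omega)]
        ring
  -- γX = 0
  have hγX : γX = 0 := by
    have hid := tmain (eX n) (eE n (2*n-6))
    rw [br_eX_eE_top hn, ht10, h8X.1, br_zero_left, h8X.2,
      key (2*n-6) (by omega) le_rfl, br_smul_right, br_eX_eE (2*n-6-2) (by omega) (by omega),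
      (h10E (2*n-6) (by omega) le_rfl).1, (h10E (2*n-6) (by omega) le_rfl).2, hX22] at hid
    rw [show (2*n-6-2+1 : ℕ) = 2*n-6-1 by omega] at hid
    have e1 : ((γX • (uYm n, uY0 n)).1) (eE n (2*n-6)) =
        (γX * ((((2*n-6:ℕ)):ℝ)-1) * (2*(n:ℝ)-5-(((2*n-6:ℕ)):ℝ))) • eE n (2*n-6-1) := by
      show γX • uYm n (eE n (2*n-6)) = _
      rw [uYm_eE (2*n-6) (by omega) le_rfl, smul_smul, mul_assoc]
    rw [e1] at hid
    simp only [Pi.zero_apply, Prod.fst_zero, zero_add, add_zero, sub_zero] at hid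
    rw [← add_smul] at hid
    have hid' := congrArg (fun z => cE z ⟨2*n-8, by omega⟩) hid
    simp only [cE_smul, cE_zero, cE_eE] at hid'
    rw [if_pos (by omega)] at hid'
    have hcast : (((2*n-6:ℕ)):ℝ) = 2*(n:ℝ)-6 := by
      rw [Nat.cast_sub (by omega)]; push_cast; ring
    rw [hcast] at hid'
    have hpos := gq_pos hn (2*n-6) le_rfl
    have hn' : (6:ℝ) ≤ (n:ℝ) := by exact_mod_cast hn
    have h2 : γX * ((2*(n:ℝ)-7) + gq n (2*n-6)) = 0 := by linear_combination -hid'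
    rcases mul_eq_zero.mp h2 with h | h
    · exact h
    · linarith
  -- t.1 eta = 0
  have hX22z : t.2.2 (eX n) = 0 := by rw [hX22, hγX, zero_smul]
  have h1H : t.1 (eHe n) = 0 := by
    have hid := tmain (eE n 1) (eE n (2*n-6))
    rw [br_eE1_eEtop hn, h8E1.1, br_zero_left, h8E1.2,
      key (2*n-6) (by omega) le_rfl, hγX, zero_mul, zero_smul, br_zero_right,
      (h10E (2*n-6) (by omega) le_rfl).1, (h10E (2*n-6) (by omega) le_rfl).2, hE122z] at hid
    have hneg : t.1 (-eHe n) = - t.1 (eHe n) := by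
      rw [← neg_one_smul ℝ (eHe n), tsmul1]
      exact neg_one_smul ℝ (t.1 (eHe n))
    rw [hneg] at hid
    simp only [Pi.zero_apply, Prod.fst_zero] at hid
    have : - t.1 (eHe n) = 0 := by
      rw [hid]
      abel
    have h2 := congrArg (fun z => -z) this
    simpa using h2
  -- assemble
  have hzadd : ∀ (M : Type) [AddCommGroup M] [Module ℝ M],
      True := fun _ _ _ => trivial
  have h1 : t.1 = (fun _ => 0 : MT n (n-4) → MT n (n-4)) := by
    refine lin_ext tadd1 tsmul1 (fun x y => by simp) (fun c x => by simp) ?_ ?_ ?_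
    · simpa using h8X.1
    · intro q h1q h3q
      by_cases hq1 : q = 1
      · subst hq1; simpa using h8E1.1
      · by_cases hq2 : q = 2
        · subst hq2; simpa using h9.1
        · have := key q (by omega) h3q
          rw [this, hγX]
          simp
    · simpa using h1H
  have h21 : t.2.1 = (fun _ => 0 : MT n (n-4) → MT n (n-4) → MT n (n-4)) := by
    refine lin_ext tadd21 tsmul21 (fun x y => by simp) (fun c x => by simp) ?_ ?_ ?_
    · simpa using h8X.2
    · intro q h1q h3q
      by_cases hq1 : q = 1
      · subst hq1; simpa using h8E1.2
      · by_cases hq2 : q = 2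
        · subst hq2; simpa using hAz
        · simpa using (h10E q (by omega) h3q).1
    · simpa using h10H.2.1
  have h22 : t.2.2 = (fun _ => 0 :
      MT n (n-4) → (MT n (n-4) → MT n (n-4)) × (MT n (n-4) → MT n (n-4) → MT n (n-4))) := by
    refine lin_ext tadd22 tsmul22 (fun x y => by simp) (fun c x => by simp) ?_ ?_ ?_
    · simpa using hX22z
    · intro q h1q h3q
      by_cases hq1 : q = 1
      · subst hq1; simpa using hE122z
      · by_cases hq2 : q = 2
        · subst hq2; simpa using h9.2
        · simpa using (h10E q (by omega) h3q).2
    · simpa using h10H.2.2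
  refine Prod.ext ?_ (Prod.ext ?_ ?_)
  · rw [h1]; rfl
  · rw [h21]; rfl
  · rw [h22]; rfl

end Infra

/-- the first prolongation `g_1` is one-dimensional, spanned by `u_Y`,
and the second prolongation `g_2` is zero. -/
theorem first_prolongation_span_and_second_zero (n : ℕ) (hn : 6 ≤ n) :
    IsG1 n (uYm n, uY0 n) ∧ (uYm n, uY0 n) ≠ 0 ∧
    (∀ p, IsG1 n p → ∃ c : ℝ, p = c • (uYm n, uY0 n)) ∧
    (∀ t, IsG2 n t → t = 0) :=
  ⟨isG1_uY hn, uY_ne_zero hn, fun p hp => g1_span hn p hp, fun t ht => g2_zero hn t ht⟩
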